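/- Type erasure is semantics-preserving: if Γ ⊢ t : τ in λτ, then Γ ⊢ t □ₙ erase(t) : τ for every n and both directions □ ∈ {≲,≳} of the step-indexed cross-language logical relation. -/

import Mathlib

set_option maxHeartbeats 1000000

namespace FAC

/-! ## Source language λτ : simply-typed CBV lambda calculus -/

inductive Ty : Type
  | unit : Ty
  | bool : Ty
  | arr (a b : Ty) : Ty
  | prod (a b : Ty) : Ty
  | sum (a b : Ty) : Ty
deriving DecidableEq

inductive STm : Type
  | var (n : ℕ)
  | unit | tt | ff
  | lam (τ : Ty) (t : STm)
  | app (t₁ t₂ : STm)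
  | pair (t₁ t₂ : STm)
  | p1 (t : STm)
  | p2 (t : STm)
  | inl (t : STm)
  | inr (t : STm)
  | caseOf (t t₁ t₂ : STm)   -- branches bind de Bruijn index 0
  | seq (t₁ t₂ : STm)
  | tif (t t₁ t₂ : STm)
  | fixt (a b : Ty) (t : STm)
deriving DecidableEq

inductive SIsVal : STm → Prop
  | unit : SIsVal .unit
  | tt : SIsVal .tt
  | ff : SIsVal .ff
  | lam {τ t} : SIsVal (.lam τ t)
  | pair {t₁ t₂} : SIsVal t₁ → SIsVal t₂ → SIsVal (.pair t₁ t₂)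
  | inl {t} : SIsVal t → SIsVal (.inl t)
  | inr {t} : SIsVal t → SIsVal (.inr t)

def liftR (f : ℕ → ℕ) : ℕ → ℕ
  | 0 => 0
  | n+1 => f n + 1

def STm.rename (f : ℕ → ℕ) : STm → STm
  | .var n => .var (f n)
  | .unit => .unit
  | .tt => .tt
  | .ff => .ff
  | .lam τ t => .lam τ (t.rename (liftR f))
  | .app a b => .app (a.rename f) (b.rename f)
  | .pair a b => .pair (a.rename f) (b.rename f)
  | .p1 t => .p1 (t.rename f)
  | .p2 t => .p2 (t.rename f)
  | .inl t => .inl (t.rename f)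
  | .inr t => .inr (t.rename f)
  | .caseOf t a b => .caseOf (t.rename f) (a.rename (liftR f)) (b.rename (liftR f))
  | .seq a b => .seq (a.rename f) (b.rename f)
  | .tif t a b => .tif (t.rename f) (a.rename f) (b.rename f)
  | .fixt a b t => .fixt a b (t.rename f)

def liftS (σ : ℕ → STm) : ℕ → STm
  | 0 => .var 0
  | n+1 => (σ n).rename Nat.succ

def STm.subst (σ : ℕ → STm) : STm → STm
  | .var n => σ n
  | .unit => .unit
  | .tt => .tt
  | .ff => .ff
  | .lam τ t => .lam τ (t.subst (liftS σ))
  | .app a b => .app (a.subst σ) (b.subst σ)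
  | .pair a b => .pair (a.subst σ) (b.subst σ)
  | .p1 t => .p1 (t.subst σ)
  | .p2 t => .p2 (t.subst σ)
  | .inl t => .inl (t.subst σ)
  | .inr t => .inr (t.subst σ)
  | .caseOf t a b => .caseOf (t.subst σ) (a.subst (liftS σ)) (b.subst (liftS σ))
  | .seq a b => .seq (a.subst σ) (b.subst σ)
  | .tif t a b => .tif (t.subst σ) (a.subst σ) (b.subst σ)
  | .fixt a b t => .fixt a b (t.subst σ)

/-- substitute `v` for de Bruijn index 0 in `t` -/
def STm.subst0 (t v : STm) : STm :=
  t.subst (fun n => match n with | 0 => v | n+1 => .var n)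

/-- Typing judgement for λτ. -/
inductive HasTy : List Ty → STm → Ty → Prop
  | var {Γ n τ} : Γ[n]? = some τ → HasTy Γ (.var n) τ
  | unit {Γ} : HasTy Γ .unit .unit
  | tt {Γ} : HasTy Γ .tt .bool
  | ff {Γ} : HasTy Γ .ff .bool
  | lam {Γ τ τ' t} : HasTy (τ :: Γ) t τ' → HasTy Γ (.lam τ t) (.arr τ τ')
  | app {Γ t t' τ τ'} : HasTy Γ t (.arr τ' τ) → HasTy Γ t' τ' → HasTy Γ (.app t t') τ
  | pair {Γ t₁ t₂ τ₁ τ₂} : HasTy Γ t₁ τ₁ → HasTy Γ t₂ τ₂ → HasTy Γ (.pair t₁ t₂) (.prod τ₁ τ₂)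
  | p1 {Γ t τ₁ τ₂} : HasTy Γ t (.prod τ₁ τ₂) → HasTy Γ (.p1 t) τ₁
  | p2 {Γ t τ₁ τ₂} : HasTy Γ t (.prod τ₁ τ₂) → HasTy Γ (.p2 t) τ₂
  | inl {Γ t τ₁ τ₂} : HasTy Γ t τ₁ → HasTy Γ (.inl t) (.sum τ₁ τ₂)
  | inr {Γ t τ₁ τ₂} : HasTy Γ t τ₂ → HasTy Γ (.inr t) (.sum τ₁ τ₂)
  | caseOf {Γ t t₁ t₂ τ₁ τ₂ τ} : HasTy Γ t (.sum τ₁ τ₂) →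
      HasTy (τ₁ :: Γ) t₁ τ → HasTy (τ₂ :: Γ) t₂ τ → HasTy Γ (.caseOf t t₁ t₂) τ
  | seq {Γ t₁ t₂ τ} : HasTy Γ t₁ .unit → HasTy Γ t₂ τ → HasTy Γ (.seq t₁ t₂) τ
  | tif {Γ t t₁ t₂ τ} : HasTy Γ t .bool → HasTy Γ t₁ τ → HasTy Γ t₂ τ →
      HasTy Γ (.tif t t₁ t₂) τ
  | fixt {Γ t a b} : HasTy Γ t (.arr (.arr a b) (.arr a b)) → HasTy Γ (.fixt a b t) (.arr a b)

/-- Small-step CBV reduction for λτ (evaluation contexts are rendered as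
congruence rules enforcing left-to-right call-by-value order). -/
inductive SStep : STm → STm → Prop
  | app1 {t₁ t₁' t₂} : SStep t₁ t₁' → SStep (.app t₁ t₂) (.app t₁' t₂)
  | app2 {v t t'} : SIsVal v → SStep t t' → SStep (.app v t) (.app v t')
  | beta {τ t v} : SIsVal v → SStep (.app (.lam τ t) v) (t.subst0 v)
  | pair1 {t₁ t₁' t₂} : SStep t₁ t₁' → SStep (.pair t₁ t₂) (.pair t₁' t₂)
  | pair2 {v t t'} : SIsVal v → SStep t t' → SStep (.pair v t) (.pair v t')
  | p1C {t t'} : SStep t t' → SStep (.p1 t) (.p1 t')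
  | p2C {t t'} : SStep t t' → SStep (.p2 t) (.p2 t')
  | p1V {v₁ v₂} : SIsVal v₁ → SIsVal v₂ → SStep (.p1 (.pair v₁ v₂)) v₁
  | p2V {v₁ v₂} : SIsVal v₁ → SIsVal v₂ → SStep (.p2 (.pair v₁ v₂)) v₂
  | inlC {t t'} : SStep t t' → SStep (.inl t) (.inl t')
  | inrC {t t'} : SStep t t' → SStep (.inr t) (.inr t')
  | caseC {t t' t₁ t₂} : SStep t t' → SStep (.caseOf t t₁ t₂) (.caseOf t' t₁ t₂)
  | caseL {v t₁ t₂} : SIsVal v → SStep (.caseOf (.inl v) t₁ t₂) (t₁.subst0 v)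
  | caseR {v t₁ t₂} : SIsVal v → SStep (.caseOf (.inr v) t₁ t₂) (t₂.subst0 v)
  | seqC {t₁ t₁' t₂} : SStep t₁ t₁' → SStep (.seq t₁ t₂) (.seq t₁' t₂)
  | seqN {t} : SStep (.seq .unit t) t
  | tifC {t t' t₁ t₂} : SStep t t' → SStep (.tif t t₁ t₂) (.tif t' t₁ t₂)
  | tifT {t₁ t₂} : SStep (.tif .tt t₁ t₂) t₁
  | tifF {t₁ t₂} : SStep (.tif .ff t₁ t₂) t₂
  | fixC {a b t t'} : SStep t t' → SStep (.fixt a b t) (.fixt a b t')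
  | fixBeta {a b t} :
      SStep (.fixt a b (.lam (.arr a b) t))
        (t.subst0 (.lam a (.app ((STm.fixt a b (.lam (.arr a b) t)).rename Nat.succ) (.var 0))))

def SStepN : ℕ → STm → STm → Prop
  | 0, t, t' => t = t'
  | n+1, t, t'' => ∃ t', SStep t t' ∧ SStepN n t' t''

def SStepStar (t t' : STm) : Prop := ∃ n, SStepN n t t'

/-- termination with a value -/
def SHalts (t : STm) : Prop := ∃ n v, SStepN n t v ∧ SIsVal v

end FAC
/-! ## Target language λu : untyped CBV lambda calculus with `wrong` -/

namespace FAC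

inductive UTm : Type
  | var (n : ℕ)
  | unit | tt | ff
  | lam (t : UTm)
  | app (t₁ t₂ : UTm)
  | pair (t₁ t₂ : UTm)
  | p1 (t : UTm)
  | p2 (t : UTm)
  | inl (t : UTm)
  | inr (t : UTm)
  | caseOf (t t₁ t₂ : UTm)
  | seq (t₁ t₂ : UTm)
  | tif (t t₁ t₂ : UTm)
  | wrong
deriving DecidableEq

inductive UIsVal : UTm → Prop
  | unit : UIsVal .unit
  | tt : UIsVal .tt
  | ff : UIsVal .ff
  | lam {t} : UIsVal (.lam t)
  | pair {t₁ t₂} : UIsVal t₁ → UIsVal t₂ → UIsVal (.pair t₁ t₂)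
  | inl {t} : UIsVal t → UIsVal (.inl t)
  | inr {t} : UIsVal t → UIsVal (.inr t)

def UTm.rename (f : ℕ → ℕ) : UTm → UTm
  | .var n => .var (f n)
  | .unit => .unit
  | .tt => .tt
  | .ff => .ff
  | .lam t => .lam (t.rename (liftR f))
  | .app a b => .app (a.rename f) (b.rename f)
  | .pair a b => .pair (a.rename f) (b.rename f)
  | .p1 t => .p1 (t.rename f)
  | .p2 t => .p2 (t.rename f)
  | .inl t => .inl (t.rename f)
  | .inr t => .inr (t.rename f)
  | .caseOf t a b => .caseOf (t.rename f) (a.rename (liftR f)) (b.rename (liftR f))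
  | .seq a b => .seq (a.rename f) (b.rename f)
  | .tif t a b => .tif (t.rename f) (a.rename f) (b.rename f)
  | .wrong => .wrong

def liftU (σ : ℕ → UTm) : ℕ → UTm
  | 0 => .var 0
  | n+1 => (σ n).rename Nat.succ

def UTm.subst (σ : ℕ → UTm) : UTm → UTm
  | .var n => σ n
  | .unit => .unit
  | .tt => .tt
  | .ff => .ff
  | .lam t => .lam (t.subst (liftU σ))
  | .app a b => .app (a.subst σ) (b.subst σ)
  | .pair a b => .pair (a.subst σ) (b.subst σ)
  | .p1 t => .p1 (t.subst σ)
  | .p2 t => .p2 (t.subst σ)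
  | .inl t => .inl (t.subst σ)
  | .inr t => .inr (t.subst σ)
  | .caseOf t a b => .caseOf (t.subst σ) (a.subst (liftU σ)) (b.subst (liftU σ))
  | .seq a b => .seq (a.subst σ) (b.subst σ)
  | .tif t a b => .tif (t.subst σ) (a.subst σ) (b.subst σ)
  | .wrong => .wrong

def UTm.subst0 (t v : UTm) : UTm :=
  t.subst (fun n => match n with | 0 => v | n+1 => .var n)

/-- Well-scopedness: all free variables are `< n`. -/
def UTm.ws : UTm → ℕ → Prop
  | .var m, n => m < n
  | .unit, _ => True
  | .tt, _ => True
  | .ff, _ => True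
  | .lam t, n => t.ws (n+1)
  | .app a b, n => a.ws n ∧ b.ws n
  | .pair a b, n => a.ws n ∧ b.ws n
  | .p1 t, n => t.ws n
  | .p2 t, n => t.ws n
  | .inl t, n => t.ws n
  | .inr t, n => t.ws n
  | .caseOf t a b, n => t.ws n ∧ a.ws (n+1) ∧ b.ws (n+1)
  | .seq a b, n => a.ws n ∧ b.ws n
  | .tif t a b, n => t.ws n ∧ a.ws n ∧ b.ws n
  | .wrong, _ => True

/-- Small-step CBV reduction for λu, with propagation of `wrong` out of any
non-trivial evaluation context and ill-typed eliminations stepping to `wrong`. -/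
inductive UStep : UTm → UTm → Prop
  | app1 {t₁ t₁' t₂} : UStep t₁ t₁' → UStep (.app t₁ t₂) (.app t₁' t₂)
  | app2 {v t t'} : UIsVal v → UStep t t' → UStep (.app v t) (.app v t')
  | beta {t v} : UIsVal v → UStep (.app (.lam t) v) (t.subst0 v)
  | appW1 {t} : UStep (.app .wrong t) .wrong
  | appW2 {v} : UIsVal v → UStep (.app v .wrong) .wrong
  | appWrong {v₁ v₂} : UIsVal v₁ → UIsVal v₂ → (∀ t, v₁ ≠ .lam t) → UStep (.app v₁ v₂) .wrong
  | pair1 {t₁ t₁' t₂} : UStep t₁ t₁' → UStep (.pair t₁ t₂) (.pair t₁' t₂)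
  | pair2 {v t t'} : UIsVal v → UStep t t' → UStep (.pair v t) (.pair v t')
  | pairW1 {t} : UStep (.pair .wrong t) .wrong
  | pairW2 {v} : UIsVal v → UStep (.pair v .wrong) .wrong
  | p1C {t t'} : UStep t t' → UStep (.p1 t) (.p1 t')
  | p2C {t t'} : UStep t t' → UStep (.p2 t) (.p2 t')
  | p1W : UStep (.p1 .wrong) .wrong
  | p2W : UStep (.p2 .wrong) .wrong
  | p1V {v₁ v₂} : UIsVal v₁ → UIsVal v₂ → UStep (.p1 (.pair v₁ v₂)) v₁
  | p2V {v₁ v₂} : UIsVal v₁ → UIsVal v₂ → UStep (.p2 (.pair v₁ v₂)) v₂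
  | p1Wrong {v} : UIsVal v → (∀ a b, v ≠ .pair a b) → UStep (.p1 v) .wrong
  | p2Wrong {v} : UIsVal v → (∀ a b, v ≠ .pair a b) → UStep (.p2 v) .wrong
  | inlC {t t'} : UStep t t' → UStep (.inl t) (.inl t')
  | inrC {t t'} : UStep t t' → UStep (.inr t) (.inr t')
  | inlW : UStep (.inl .wrong) .wrong
  | inrW : UStep (.inr .wrong) .wrong
  | caseC {t t' t₁ t₂} : UStep t t' → UStep (.caseOf t t₁ t₂) (.caseOf t' t₁ t₂)
  | caseW {t₁ t₂} : UStep (.caseOf .wrong t₁ t₂) .wrong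
  | caseL {v t₁ t₂} : UIsVal v → UStep (.caseOf (.inl v) t₁ t₂) (t₁.subst0 v)
  | caseR {v t₁ t₂} : UIsVal v → UStep (.caseOf (.inr v) t₁ t₂) (t₂.subst0 v)
  | caseWrong {v t₁ t₂} : UIsVal v → (∀ w, v ≠ .inl w) → (∀ w, v ≠ .inr w) →
      UStep (.caseOf v t₁ t₂) .wrong
  | seqC {t₁ t₁' t₂} : UStep t₁ t₁' → UStep (.seq t₁ t₂) (.seq t₁' t₂)
  | seqW {t} : UStep (.seq .wrong t) .wrong
  | seqN {t} : UStep (.seq .unit t) t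
  | seqWrong {v t} : UIsVal v → v ≠ .unit → UStep (.seq v t) .wrong
  | tifC {t t' t₁ t₂} : UStep t t' → UStep (.tif t t₁ t₂) (.tif t' t₁ t₂)
  | tifW {t₁ t₂} : UStep (.tif .wrong t₁ t₂) .wrong
  | tifT {t₁ t₂} : UStep (.tif .tt t₁ t₂) t₁
  | tifF {t₁ t₂} : UStep (.tif .ff t₁ t₂) t₂
  | tifWrong {v t₁ t₂} : UIsVal v → v ≠ .tt → v ≠ .ff → UStep (.tif v t₁ t₂) .wrong

def UStepN : ℕ → UTm → UTm → Prop
  | 0, t, t' => t = t'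
  | n+1, t, t'' => ∃ t', UStep t t' ∧ UStepN n t' t''

def UStepStar (t t' : UTm) : Prop := ∃ n, UStepN n t t'

def UStepPlus (t t' : UTm) : Prop := ∃ n, 0 < n ∧ UStepN n t t'

/-- termination with a value (`wrong` is not a value) -/
def UHalts (t : UTm) : Prop := ∃ n v, UStepN n t v ∧ UIsVal v

end FAC
/-! ## Type erasure and the Z combinator -/

namespace FAC

/-- the Z (call-by-value Y) combinator: `λf.(λx. f (λy. x x y)) (λx. f (λy. x x y))` -/
def Zcomb : UTm :=
  .lam (.app
    (.lam (.app (.var 1) (.lam (.app (.app (.var 1) (.var 1)) (.var 0)))))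
    (.lam (.app (.var 1) (.lam (.app (.app (.var 1) (.var 1)) (.var 0))))))

/-- `λx. f (λy. x x y)`, for a given (closed) `f` -/
def gOf (f : UTm) : UTm :=
  .lam (.app (f.rename Nat.succ) (.lam (.app (.app (.var 1) (.var 1)) (.var 0))))

/-- Type erasure from λτ to λu; `fix` is mapped to the Z combinator. -/
def erase : STm → UTm
  | .var n => .var n
  | .unit => .unit
  | .tt => .tt
  | .ff => .ff
  | .lam _ t => .lam (erase t)
  | .app a b => .app (erase a) (erase b)
  | .pair a b => .pair (erase a) (erase b)
  | .p1 t => .p1 (erase t)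
  | .p2 t => .p2 (erase t)
  | .inl t => .inl (erase t)
  | .inr t => .inr (erase t)
  | .caseOf t a b => .caseOf (erase t) (erase a) (erase b)
  | .seq a b => .seq (erase a) (erase b)
  | .tif t a b => .tif (erase t) (erase a) (erase b)
  | .fixt _ _ t => .app Zcomb (erase t)

/-! ## Dynamic type-checking wrappers protect/confine -/

/-- `wrap τ true = protect_τ`, `wrap τ false = confine_τ`. -/
def wrap : Ty → Bool → UTm
  | .unit, true => .lam (.var 0)
  | .bool, true => .lam (.var 0)
  | .unit, false => .lam (.seq (.var 0) .unit)
  | .bool, false => .lam (.tif (.var 0) .tt .ff)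
  | .prod a b, p => .lam (.pair (.app (wrap a p) (.p1 (.var 0))) (.app (wrap b p) (.p2 (.var 0))))
  | .sum a b, p => .lam (.caseOf (.var 0)
      (.inl (.app (wrap a p) (.var 0)))
      (.inr (.app (wrap b p) (.var 0))))
  | .arr a b, p => .lam (.lam (.app (wrap b p) (.app (.var 1) (.app (wrap a (!p)) (.var 0)))))

def protect (τ : Ty) : UTm := wrap τ true
def confine (τ : Ty) : UTm := wrap τ false

/-- the compiler: protect the erased term -/
def compile (τ : Ty) (t : STm) : UTm := .app (protect τ) (erase t)

/-! ## UVal and its tools -/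

/-- the family of λτ types UVal_n -/
def UValTy : ℕ → Ty
  | 0 => .unit
  | n+1 => .sum .unit (.sum .unit (.sum .bool (.sum (.prod (UValTy n) (UValTy n))
      (.sum (.sum (UValTy n) (UValTy n)) (.arr (UValTy n) (UValTy n))))))

def inUnk : STm := .inl .unit
def inUnit (v : STm) : STm := .inr (.inl v)
def inBool (v : STm) : STm := .inr (.inr (.inl v))
def inProd (v : STm) : STm := .inr (.inr (.inr (.inl v)))
def inSum (v : STm) : STm := .inr (.inr (.inr (.inr (.inl v))))
def inArr (v : STm) : STm := .inr (.inr (.inr (.inr (.inr v))))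

def unkUVal : ℕ → STm
  | 0 => .unit
  | _+1 => inUnk

/-- the diverging term `omega_τ = fix_{Unit→τ} (λx:Unit→τ. x) unit` -/
def omegaTm (τ : Ty) : STm :=
  .app (.fixt .unit τ (.lam (.arr .unit τ) (.var 0))) .unit

/-- `caseUVal_{Unit;n} : UVal_{n+1} → Unit` -/
def caseUnitU (n : ℕ) : STm :=
  .lam (UValTy (n+1)) (.caseOf (.var 0) (omegaTm .unit)
    (.caseOf (.var 0) (.var 0) (omegaTm .unit)))

def caseBoolU (n : ℕ) : STm :=
  .lam (UValTy (n+1)) (.caseOf (.var 0) (omegaTm .bool)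
    (.caseOf (.var 0) (omegaTm .bool)
      (.caseOf (.var 0) (.var 0) (omegaTm .bool))))

def caseProdU (n : ℕ) : STm :=
  .lam (UValTy (n+1)) (.caseOf (.var 0) (omegaTm (.prod (UValTy n) (UValTy n)))
    (.caseOf (.var 0) (omegaTm (.prod (UValTy n) (UValTy n)))
      (.caseOf (.var 0) (omegaTm (.prod (UValTy n) (UValTy n)))
        (.caseOf (.var 0) (.var 0) (omegaTm (.prod (UValTy n) (UValTy n)))))))

def caseSumU (n : ℕ) : STm :=
  .lam (UValTy (n+1)) (.caseOf (.var 0) (omegaTm (.sum (UValTy n) (UValTy n)))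
    (.caseOf (.var 0) (omegaTm (.sum (UValTy n) (UValTy n)))
      (.caseOf (.var 0) (omegaTm (.sum (UValTy n) (UValTy n)))
        (.caseOf (.var 0) (omegaTm (.sum (UValTy n) (UValTy n)))
          (.caseOf (.var 0) (.var 0) (omegaTm (.sum (UValTy n) (UValTy n))))))))

/-- `caseUVal_{→;n} : UVal_{n+1} → UVal_n → UVal_n` -/
def caseArrU (n : ℕ) : STm :=
  .lam (UValTy (n+1)) (.lam (UValTy n)
    (.caseOf (.var 1) (omegaTm (UValTy n))
      (.caseOf (.var 0) (omegaTm (UValTy n))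
        (.caseOf (.var 0) (omegaTm (UValTy n))
          (.caseOf (.var 0) (omegaTm (UValTy n))
            (.caseOf (.var 0) (omegaTm (UValTy n))
              (.app (.var 0) (.var 5))))))))

/-- `updown d true n = upgrade_{n;d} : UVal_n → UVal_{n+d}`,
    `updown d false n = downgrade_{n;d} : UVal_{n+d} → UVal_n`. -/
def updown (d : ℕ) : Bool → ℕ → STm
  | up, 0 => if up then .lam (UValTy 0) (unkUVal d) else .lam (UValTy d) (unkUVal 0)
  | up, n+1 =>
    let sm := updown d up n
    let op := updown d (!up) n
    let aTy := if up then UValTy (n+1) else UValTy (n+d+1)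
    let zTy := if up then UValTy (n+d) else UValTy n
    .lam aTy (.caseOf (.var 0) inUnk
      (.caseOf (.var 0) (inUnit (.var 0))
        (.caseOf (.var 0) (inBool (.var 0))
          (.caseOf (.var 0)
            (inProd (.pair (.app sm (.p1 (.var 0))) (.app sm (.p2 (.var 0)))))
            (.caseOf (.var 0)
              (inSum (.caseOf (.var 0) (.inl (.app sm (.var 0))) (.inr (.app sm (.var 0)))))
              (inArr (.lam zTy (.app sm (.app (.var 1) (.app op (.var 0)))))))))))

def upgrade (n d : ℕ) : STm := updown d true n
def downgrade (n d : ℕ) : STm := updown d false n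

/-! ## inject / extract -/

/-- `(injext n τ).1 = inject_{τ;n} : τ → UVal_n` and
    `(injext n τ).2 = extract_{τ;n} : UVal_n → τ`. -/
def injext : ℕ → Ty → STm × STm
  | 0, τ => (.lam τ (omegaTm (UValTy 0)), .lam (UValTy 0) (omegaTm τ))
  | n+1, τ =>
    match τ with
    | .unit => (.lam .unit (inUnit (.var 0)), caseUnitU n)
    | .bool => (.lam .bool (inBool (.var 0)), caseBoolU n)
    | .prod a b =>
      (.lam (.prod a b) (inProd (.pair
          (.app (injext n a).1 (.p1 (.var 0)))
          (.app (injext n b).1 (.p2 (.var 0))))),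
       .lam (UValTy (n+1)) (.pair
          (.app (injext n a).2 (.p1 (.app (caseProdU n) (.var 0))))
          (.app (injext n b).2 (.p2 (.app (caseProdU n) (.var 0))))))
    | .sum a b =>
      (.lam (.sum a b) (inSum (.caseOf (.var 0)
          (.inl (.app (injext n a).1 (.var 0)))
          (.inr (.app (injext n b).1 (.var 0))))),
       .lam (UValTy (n+1)) (.caseOf (.app (caseSumU n) (.var 0))
          (.inl (.app (injext n a).2 (.var 0)))
          (.inr (.app (injext n b).2 (.var 0)))))
    | .arr a b =>
      (.lam (.arr a b) (inArr (.lam (UValTy n)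
          (.app (injext n b).1 (.app (.var 1) (.app (injext n a).2 (.var 0)))))),
       .lam (UValTy (n+1)) (.lam a
          (.app (injext n b).2
            (.app (.app (caseArrU n) (.var 1)) (.app (injext n a).1 (.var 0))))))

def injectTm (n : ℕ) (τ : Ty) : STm := (injext n τ).1
def extractTm (n : ℕ) (τ : Ty) : STm := (injext n τ).2

end FAC
/-! ## Emulation of λu terms in UVal_n -/

namespace FAC

/-- `emulate n t̲` : the approximate back-translation of a λu term into a λτ term
of type `UVal_n`. -/
def emulate (n : ℕ) : UTm → STm
  | .var i => .var i
  | .unit => .app (downgrade n 1) (inUnit .unit)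
  | .tt => .app (downgrade n 1) (inBool .tt)
  | .ff => .app (downgrade n 1) (inBool .ff)
  | .lam t => .app (downgrade n 1) (inArr (.lam (UValTy n) (emulate n t)))
  | .app t₁ t₂ =>
      .app (.app (caseArrU n) (.app (upgrade n 1) (emulate n t₁))) (emulate n t₂)
  | .pair t₁ t₂ => .app (downgrade n 1) (inProd (.pair (emulate n t₁) (emulate n t₂)))
  | .p1 t => .p1 (.app (caseProdU n) (.app (upgrade n 1) (emulate n t)))
  | .p2 t => .p2 (.app (caseProdU n) (.app (upgrade n 1) (emulate n t)))
  | .inl t => .app (downgrade n 1) (inSum (.inl (emulate n t)))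
  | .inr t => .app (downgrade n 1) (inSum (.inr (emulate n t)))
  | .caseOf t t₁ t₂ =>
      .caseOf (.app (caseSumU n) (.app (upgrade n 1) (emulate n t)))
        (emulate n t₁) (emulate n t₂)
  | .seq t₁ t₂ => .seq (.app (caseUnitU n) (.app (upgrade n 1) (emulate n t₁))) (emulate n t₂)
  | .tif t t₁ t₂ =>
      .tif (.app (caseBoolU n) (.app (upgrade n 1) (emulate n t)))
        (emulate n t₁) (emulate n t₂)
  | .wrong => omegaTm (UValTy n)

/-! ## Pseudo-types -/

inductive Prec : Type
  | precise | imprecise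
deriving DecidableEq

/-- pseudo-types: λτ types together with the token type `EmulDV_{n;p}` -/
inductive PTy : Type
  | unit : PTy
  | bool : PTy
  | arr (a b : PTy) : PTy
  | prod (a b : PTy) : PTy
  | sum (a b : PTy) : PTy
  | emul (n : ℕ) (p : Prec) : PTy
deriving DecidableEq

/-- conversion of pseudo-types to λτ types: `EmulDV_{n;p}` becomes `UVal_n` -/
def repEmul : PTy → Ty
  | .unit => .unit
  | .bool => .bool
  | .arr a b => .arr (repEmul a) (repEmul b)
  | .prod a b => .prod (repEmul a) (repEmul b)
  | .sum a b => .sum (repEmul a) (repEmul b)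
  | .emul n _ => UValTy n

/-- embedding of λτ types into pseudo-types -/
def Ty.toP : Ty → PTy
  | .unit => .unit
  | .bool => .bool
  | .arr a b => .arr a.toP b.toP
  | .prod a b => .prod a.toP b.toP
  | .sum a b => .sum a.toP b.toP

def PTy.weight : PTy → ℕ
  | .unit => 1
  | .bool => 1
  | .arr a b => a.weight + b.weight + 1
  | .prod a b => a.weight + b.weight + 1
  | .sum a b => a.weight + b.weight + 1
  | .emul n _ => 2 * 3 ^ n

/-! ## Evaluation contexts -/

inductive SEC : Type
  | hole
  | appL (C : SEC) (t : STm)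
  | appR (v : STm) (C : SEC)
  | pairL (C : SEC) (t : STm)
  | pairR (v : STm) (C : SEC)
  | p1 (C : SEC)
  | p2 (C : SEC)
  | inl (C : SEC)
  | inr (C : SEC)
  | caseOf (C : SEC) (t₁ t₂ : STm)
  | seq (C : SEC) (t : STm)
  | tif (C : SEC) (t₁ t₂ : STm)
  | fixt (a b : Ty) (C : SEC)

def SEC.ok : SEC → Prop
  | .hole => True
  | .appL C _ => C.ok
  | .appR v C => SIsVal v ∧ C.ok
  | .pairL C _ => C.ok
  | .pairR v C => SIsVal v ∧ C.ok
  | .p1 C => C.ok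
  | .p2 C => C.ok
  | .inl C => C.ok
  | .inr C => C.ok
  | .caseOf C _ _ => C.ok
  | .seq C _ => C.ok
  | .tif C _ _ => C.ok
  | .fixt _ _ C => C.ok

def SEC.plug : SEC → STm → STm
  | .hole, t => t
  | .appL C u, t => .app (C.plug t) u
  | .appR v C, t => .app v (C.plug t)
  | .pairL C u, t => .pair (C.plug t) u
  | .pairR v C, t => .pair v (C.plug t)
  | .p1 C, t => .p1 (C.plug t)
  | .p2 C, t => .p2 (C.plug t)
  | .inl C, t => .inl (C.plug t)
  | .inr C, t => .inr (C.plug t)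
  | .caseOf C a b, t => .caseOf (C.plug t) a b
  | .seq C u, t => .seq (C.plug t) u
  | .tif C a b, t => .tif (C.plug t) a b
  | .fixt a b C, t => .fixt a b (C.plug t)

inductive UEC : Type
  | hole
  | appL (C : UEC) (t : UTm)
  | appR (v : UTm) (C : UEC)
  | pairL (C : UEC) (t : UTm)
  | pairR (v : UTm) (C : UEC)
  | p1 (C : UEC)
  | p2 (C : UEC)
  | inl (C : UEC)
  | inr (C : UEC)
  | caseOf (C : UEC) (t₁ t₂ : UTm)
  | seq (C : UEC) (t : UTm)
  | tif (C : UEC) (t₁ t₂ : UTm)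

def UEC.ok : UEC → Prop
  | .hole => True
  | .appL C _ => C.ok
  | .appR v C => UIsVal v ∧ C.ok
  | .pairL C _ => C.ok
  | .pairR v C => UIsVal v ∧ C.ok
  | .p1 C => C.ok
  | .p2 C => C.ok
  | .inl C => C.ok
  | .inr C => C.ok
  | .caseOf C _ _ => C.ok
  | .seq C _ => C.ok
  | .tif C _ _ => C.ok

def UEC.plug : UEC → UTm → UTm
  | .hole, t => t
  | .appL C u, t => .app (C.plug t) u
  | .appR v C, t => .app v (C.plug t)
  | .pairL C u, t => .pair (C.plug t) u
  | .pairR v C, t => .pair v (C.plug t)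
  | .p1 C, t => .p1 (C.plug t)
  | .p2 C, t => .p2 (C.plug t)
  | .inl C, t => .inl (C.plug t)
  | .inr C, t => .inr (C.plug t)
  | .caseOf C a b, t => .caseOf (C.plug t) a b
  | .seq C u, t => .seq (C.plug t) u
  | .tif C a b, t => .tif (C.plug t) a b

end FAC
/-! ## The step-indexed, asymmetric, cross-language logical relations -/

namespace FAC

/-- direction of approximation: `lt` is ≲ and `gt` is ≳ -/
inductive Dir : Type
  | lt | gt
deriving DecidableEq

/-- the observation relation `O(W)_□` on worlds `W = (k)` -/
def Obs (dir : Dir) (k : ℕ) (ts : STm) (tu : UTm) : Prop :=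
  match dir with
  | .lt => (∃ m ≤ k, ∃ v, SStepN m ts v ∧ SIsVal v) → UHalts tu
  | .gt => (∃ m ≤ k, ∃ v, UStepN m tu v ∧ UIsVal v) → SHalts ts

/-- The value relation `(W, vs, vu) ∈ V⟦τ̂⟧_dir`, defined by well-founded
recursion on the lexicographic pair (world level, weight of the pseudo-type).
The term and continuation relations of the biorthogonal definition are
inlined at the recursive occurrences. -/
def ValRel (dir : Dir) (k : ℕ) (τ : PTy) (vs : STm) (vu : UTm) : Prop :=
  match τ with
  | .unit => HasTy [] vs .unit ∧ vu.ws 0 ∧ vs = .unit ∧ vu = .unit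
  | .bool => HasTy [] vs .bool ∧ vu.ws 0 ∧
      ((vs = .tt ∧ vu = .tt) ∨ (vs = .ff ∧ vu = .ff))
  | .prod a b =>
      HasTy [] vs (repEmul (.prod a b)) ∧ vu.ws 0 ∧
      ∃ v₁ v₂ u₁ u₂, vs = .pair v₁ v₂ ∧ vu = .pair u₁ u₂ ∧
        SIsVal v₁ ∧ SIsVal v₂ ∧ UIsVal u₁ ∧ UIsVal u₂ ∧
        (∀ j, j + 1 ≤ k → ValRel dir j a v₁ u₁ ∧ ValRel dir j b v₂ u₂)
  | .sum a b =>
      HasTy [] vs (repEmul (.sum a b)) ∧ vu.ws 0 ∧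
      ((∃ v u, vs = .inl v ∧ vu = .inl u ∧ SIsVal v ∧ UIsVal u ∧
          (∀ j, j + 1 ≤ k → ValRel dir j a v u)) ∨
       (∃ v u, vs = .inr v ∧ vu = .inr u ∧ SIsVal v ∧ UIsVal u ∧
          (∀ j, j + 1 ≤ k → ValRel dir j b v u)))
  | .arr a b =>
      HasTy [] vs (repEmul (.arr a b)) ∧ vu.ws 0 ∧
      ∃ ts tu, vs = .lam (repEmul a) ts ∧ vu = .lam tu ∧
        ∀ j, j < k → ∀ vs' vu', SIsVal vs' → UIsVal vu' → ValRel dir j a vs' vu' →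
          -- inlined term relation at type b, world j
          ∀ Cs Cu, SEC.ok Cs → UEC.ok Cu →
            (∀ i, i ≤ j → ∀ ws wu, SIsVal ws → UIsVal wu → ValRel dir i b ws wu →
              Obs dir i (Cs.plug ws) (Cu.plug wu)) →
            Obs dir j (Cs.plug (ts.subst0 vs')) (Cu.plug (tu.subst0 vu'))
  | .emul 0 p => HasTy [] vs (UValTy 0) ∧ vu.ws 0 ∧ vs = .unit ∧ p = .imprecise
  | .emul (n+1) p =>
      HasTy [] vs (UValTy (n+1)) ∧ vu.ws 0 ∧
      ((vs = inUnk ∧ p = .imprecise) ∨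
       (∃ v, vs = inUnit v ∧ ValRel dir k .unit v vu) ∨
       (∃ v, vs = inBool v ∧ ValRel dir k .bool v vu) ∨
       (∃ v, vs = inProd v ∧ ValRel dir k (.prod (.emul n p) (.emul n p)) v vu) ∨
       (∃ v, vs = inSum v ∧ ValRel dir k (.sum (.emul n p) (.emul n p)) v vu) ∨
       (∃ v, vs = inArr v ∧ ValRel dir k (.arr (.emul n p) (.emul n p)) v vu))
termination_by (k, τ.weight)
decreasing_by
  all_goals simp_wf
  all_goals try (exact Prod.Lex.left _ _ (by omega))
  all_goals
    refine Prod.Lex.right _ ?_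
  all_goals simp [PTy.weight, pow_succ]
  all_goals nlinarith [Nat.one_le_two_pow (n := n), Nat.one_le_pow n 3 (by omega)]

end FAC
namespace FAC

/-- continuation (evaluation-context) relation: biorthogonality -/
def ContRel (dir : Dir) (k : ℕ) (τ : PTy) (Cs : SEC) (Cu : UEC) : Prop :=
  Cs.ok ∧ Cu.ok ∧
  ∀ i, i ≤ k → ∀ vs vu, SIsVal vs → UIsVal vu → ValRel dir i τ vs vu →
    Obs dir i (Cs.plug vs) (Cu.plug vu)

/-- term relation -/
def TermRel (dir : Dir) (k : ℕ) (τ : PTy) (t : STm) (u : UTm) : Prop :=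
  ∀ Cs Cu, ContRel dir k τ Cs Cu → Obs dir k (Cs.plug t) (Cu.plug u)

/-- relation on closing substitutions instantiating a pseudo-context -/
def EnvRel (dir : Dir) (k : ℕ) (Γ : List PTy) (γs : ℕ → STm) (γu : ℕ → UTm) : Prop :=
  ∀ i τ, Γ[i]? = some τ →
    SIsVal (γs i) ∧ UIsVal (γu i) ∧ ValRel dir k τ (γs i) (γu i)

/-- the logical relation `Γ̂ ⊢ t □ₙ t̲ : τ̂` on open terms, up to `n` steps -/
def LogRelN (dir : Dir) (n : ℕ) (Γ : List PTy) (t : STm) (u : UTm) (τ : PTy) : Prop :=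
  HasTy (Γ.map repEmul) t (repEmul τ) ∧ u.ws Γ.length ∧
  ∀ k, k ≤ n → ∀ γs γu, EnvRel dir k Γ γs γu →
    TermRel dir k τ (t.subst γs) (u.subst γu)

/-- `Γ̂ ⊢ t □ t̲ : τ̂` : related up to any number of steps -/
def LogRel (dir : Dir) (Γ : List PTy) (t : STm) (u : UTm) (τ : PTy) : Prop :=
  ∀ n, LogRelN dir n Γ t u τ

/-! ## Program contexts -/

inductive SPC : Type
  | hole
  | lam (τ : Ty) (C : SPC)
  | appL (C : SPC) (t : STm)
  | appR (t : STm) (C : SPC)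
  | pairL (C : SPC) (t : STm)
  | pairR (t : STm) (C : SPC)
  | p1 (C : SPC)
  | p2 (C : SPC)
  | inl (C : SPC)
  | inr (C : SPC)
  | caseS (C : SPC) (t₁ t₂ : STm)
  | caseL (t : STm) (C : SPC) (t₂ : STm)
  | caseR (t t₁ : STm) (C : SPC)
  | seqL (C : SPC) (t : STm)
  | seqR (t : STm) (C : SPC)
  | tifC (C : SPC) (t₁ t₂ : STm)
  | tifT (t : STm) (C : SPC) (t₂ : STm)
  | tifF (t t₁ : STm) (C : SPC)
  | fixt (a b : Ty) (C : SPC)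

def SPC.plug : SPC → STm → STm
  | .hole, t => t
  | .lam τ C, t => .lam τ (C.plug t)
  | .appL C u, t => .app (C.plug t) u
  | .appR u C, t => .app u (C.plug t)
  | .pairL C u, t => .pair (C.plug t) u
  | .pairR u C, t => .pair u (C.plug t)
  | .p1 C, t => .p1 (C.plug t)
  | .p2 C, t => .p2 (C.plug t)
  | .inl C, t => .inl (C.plug t)
  | .inr C, t => .inr (C.plug t)
  | .caseS C a b, t => .caseOf (C.plug t) a b
  | .caseL u C b, t => .caseOf u (C.plug t) b
  | .caseR u a C, t => .caseOf u a (C.plug t)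
  | .seqL C u, t => .seq (C.plug t) u
  | .seqR u C, t => .seq u (C.plug t)
  | .tifC C a b, t => .tif (C.plug t) a b
  | .tifT u C b, t => .tif u (C.plug t) b
  | .tifF u a C, t => .tif u a (C.plug t)
  | .fixt a b C, t => .fixt a b (C.plug t)

/-- context typing `⊢ C : (Γ',τ') → (Γ,τ)` -/
inductive SPCTy : SPC → List Ty → Ty → List Ty → Ty → Prop
  | hole {Γ τ} : SPCTy .hole Γ τ Γ τ
  | lam {C Γ' τ' Γ σ τ} : SPCTy C Γ' τ' (σ :: Γ) τ → SPCTy (.lam σ C) Γ' τ' Γ (.arr σ τ)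
  | appL {C Γ' τ' Γ a b t} : SPCTy C Γ' τ' Γ (.arr a b) → HasTy Γ t a →
      SPCTy (.appL C t) Γ' τ' Γ b
  | appR {C Γ' τ' Γ a b t} : HasTy Γ t (.arr a b) → SPCTy C Γ' τ' Γ a →
      SPCTy (.appR t C) Γ' τ' Γ b
  | pairL {C Γ' τ' Γ a b t} : SPCTy C Γ' τ' Γ a → HasTy Γ t b →
      SPCTy (.pairL C t) Γ' τ' Γ (.prod a b)
  | pairR {C Γ' τ' Γ a b t} : HasTy Γ t a → SPCTy C Γ' τ' Γ b →
      SPCTy (.pairR t C) Γ' τ' Γ (.prod a b)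
  | p1 {C Γ' τ' Γ a b} : SPCTy C Γ' τ' Γ (.prod a b) → SPCTy (.p1 C) Γ' τ' Γ a
  | p2 {C Γ' τ' Γ a b} : SPCTy C Γ' τ' Γ (.prod a b) → SPCTy (.p2 C) Γ' τ' Γ b
  | inl {C Γ' τ' Γ a b} : SPCTy C Γ' τ' Γ a → SPCTy (.inl C) Γ' τ' Γ (.sum a b)
  | inr {C Γ' τ' Γ a b} : SPCTy C Γ' τ' Γ b → SPCTy (.inr C) Γ' τ' Γ (.sum a b)
  | caseS {C Γ' τ' Γ a b τ t₁ t₂} : SPCTy C Γ' τ' Γ (.sum a b) →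
      HasTy (a :: Γ) t₁ τ → HasTy (b :: Γ) t₂ τ → SPCTy (.caseS C t₁ t₂) Γ' τ' Γ τ
  | caseL {C Γ' τ' Γ a b τ t t₂} : HasTy Γ t (.sum a b) →
      SPCTy C Γ' τ' (a :: Γ) τ → HasTy (b :: Γ) t₂ τ → SPCTy (.caseL t C t₂) Γ' τ' Γ τ
  | caseR {C Γ' τ' Γ a b τ t t₁} : HasTy Γ t (.sum a b) →
      HasTy (a :: Γ) t₁ τ → SPCTy C Γ' τ' (b :: Γ) τ → SPCTy (.caseR t t₁ C) Γ' τ' Γ τ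
  | seqL {C Γ' τ' Γ τ t} : SPCTy C Γ' τ' Γ .unit → HasTy Γ t τ →
      SPCTy (.seqL C t) Γ' τ' Γ τ
  | seqR {C Γ' τ' Γ τ t} : HasTy Γ t .unit → SPCTy C Γ' τ' Γ τ →
      SPCTy (.seqR t C) Γ' τ' Γ τ
  | tifC {C Γ' τ' Γ τ t₁ t₂} : SPCTy C Γ' τ' Γ .bool → HasTy Γ t₁ τ → HasTy Γ t₂ τ →
      SPCTy (.tifC C t₁ t₂) Γ' τ' Γ τ
  | tifT {C Γ' τ' Γ τ t t₂} : HasTy Γ t .bool → SPCTy C Γ' τ' Γ τ → HasTy Γ t₂ τ →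
      SPCTy (.tifT t C t₂) Γ' τ' Γ τ
  | tifF {C Γ' τ' Γ τ t t₁} : HasTy Γ t .bool → HasTy Γ t₁ τ → SPCTy C Γ' τ' Γ τ →
      SPCTy (.tifF t t₁ C) Γ' τ' Γ τ
  | fixt {C Γ' τ' Γ a b} : SPCTy C Γ' τ' Γ (.arr (.arr a b) (.arr a b)) →
      SPCTy (.fixt a b C) Γ' τ' Γ (.arr a b)

inductive UPC : Type
  | hole
  | lam (C : UPC)
  | appL (C : UPC) (t : UTm)
  | appR (t : UTm) (C : UPC)
  | pairL (C : UPC) (t : UTm)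
  | pairR (t : UTm) (C : UPC)
  | p1 (C : UPC)
  | p2 (C : UPC)
  | inl (C : UPC)
  | inr (C : UPC)
  | caseS (C : UPC) (t₁ t₂ : UTm)
  | caseL (t : UTm) (C : UPC) (t₂ : UTm)
  | caseR (t t₁ : UTm) (C : UPC)
  | seqL (C : UPC) (t : UTm)
  | seqR (t : UTm) (C : UPC)
  | tifC (C : UPC) (t₁ t₂ : UTm)
  | tifT (t : UTm) (C : UPC) (t₂ : UTm)
  | tifF (t t₁ : UTm) (C : UPC)

def UPC.plug : UPC → UTm → UTm
  | .hole, t => t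
  | .lam C, t => .lam (C.plug t)
  | .appL C u, t => .app (C.plug t) u
  | .appR u C, t => .app u (C.plug t)
  | .pairL C u, t => .pair (C.plug t) u
  | .pairR u C, t => .pair u (C.plug t)
  | .p1 C, t => .p1 (C.plug t)
  | .p2 C, t => .p2 (C.plug t)
  | .inl C, t => .inl (C.plug t)
  | .inr C, t => .inr (C.plug t)
  | .caseS C a b, t => .caseOf (C.plug t) a b
  | .caseL u C b, t => .caseOf u (C.plug t) b
  | .caseR u a C, t => .caseOf u a (C.plug t)
  | .seqL C u, t => .seq (C.plug t) u
  | .seqR u C, t => .seq u (C.plug t)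
  | .tifC C a b, t => .tif (C.plug t) a b
  | .tifT u C b, t => .tif u (C.plug t) b
  | .tifF u a C, t => .tif u a (C.plug t)

/-- `UPCWs C m n` : context `C` maps terms with `m` free variables (the hole's scope)
to terms with `n` free variables (`⊢ C : m → n`). -/
inductive UPCWs : UPC → ℕ → ℕ → Prop
  | hole {n} : UPCWs .hole n n
  | lam {C m n} : UPCWs C m (n+1) → UPCWs (.lam C) m n
  | appL {C m n t} : UPCWs C m n → UTm.ws t n → UPCWs (.appL C t) m n
  | appR {C m n t} : UTm.ws t n → UPCWs C m n → UPCWs (.appR t C) m n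
  | pairL {C m n t} : UPCWs C m n → UTm.ws t n → UPCWs (.pairL C t) m n
  | pairR {C m n t} : UTm.ws t n → UPCWs C m n → UPCWs (.pairR t C) m n
  | p1 {C m n} : UPCWs C m n → UPCWs (.p1 C) m n
  | p2 {C m n} : UPCWs C m n → UPCWs (.p2 C) m n
  | inl {C m n} : UPCWs C m n → UPCWs (.inl C) m n
  | inr {C m n} : UPCWs C m n → UPCWs (.inr C) m n
  | caseS {C m n t₁ t₂} : UPCWs C m n → UTm.ws t₁ (n+1) → UTm.ws t₂ (n+1) →
      UPCWs (.caseS C t₁ t₂) m n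
  | caseL {C m n t t₂} : UTm.ws t n → UPCWs C m (n+1) → UTm.ws t₂ (n+1) →
      UPCWs (.caseL t C t₂) m n
  | caseR {C m n t t₁} : UTm.ws t n → UTm.ws t₁ (n+1) → UPCWs C m (n+1) →
      UPCWs (.caseR t t₁ C) m n
  | seqL {C m n t} : UPCWs C m n → UTm.ws t n → UPCWs (.seqL C t) m n
  | seqR {C m n t} : UTm.ws t n → UPCWs C m n → UPCWs (.seqR t C) m n
  | tifC {C m n t₁ t₂} : UPCWs C m n → UTm.ws t₁ n → UTm.ws t₂ n →
      UPCWs (.tifC C t₁ t₂) m n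
  | tifT {C m n t t₂} : UTm.ws t n → UPCWs C m n → UTm.ws t₂ n →
      UPCWs (.tifT t C t₂) m n
  | tifF {C m n t t₁} : UTm.ws t n → UTm.ws t₁ n → UPCWs C m n →
      UPCWs (.tifF t t₁ C) m n

/-! ## Contextual equivalence -/

/-- `t₁ ≃ctx t₂ : τ` in λτ (for closed terms) -/
def SCtxEq (t₁ t₂ : STm) (τ : Ty) : Prop :=
  ∀ C τ', SPCTy C [] τ [] τ' → (SHalts (C.plug t₁) ↔ SHalts (C.plug t₂))

/-- `t̲₁ ≃ctx t̲₂` in λu (for closed terms) -/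
def UCtxEq (u₁ u₂ : UTm) : Prop :=
  ∀ C, UPCWs C 0 0 → (UHalts (C.plug u₁) ↔ UHalts (C.plug u₂))

/-! ## Emulation of λu program contexts -/

/-- `emulateC n C̲` : back-translation of a λu program context into a λτ program
context with hole of type `UVal_n`. -/
def emulateC (n : ℕ) : UPC → SPC
  | .hole => .hole
  | .lam C => .appR (downgrade n 1)
      (.inr (.inr (.inr (.inr (.inr (.lam (UValTy n) (emulateC n C)))))))
  | .appL C t => .appL (.appR (caseArrU n) (.appR (upgrade n 1) (emulateC n C))) (emulate n t)
  | .appR t C => .appR (.app (caseArrU n) (.app (upgrade n 1) (emulate n t))) (emulateC n C)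
  | .pairL C t => .appR (downgrade n 1)
      (.inr (.inr (.inr (.inl (.pairL (emulateC n C) (emulate n t))))))
  | .pairR t C => .appR (downgrade n 1)
      (.inr (.inr (.inr (.inl (.pairR (emulate n t) (emulateC n C))))))
  | .p1 C => .p1 (.appR (caseProdU n) (.appR (upgrade n 1) (emulateC n C)))
  | .p2 C => .p2 (.appR (caseProdU n) (.appR (upgrade n 1) (emulateC n C)))
  | .inl C => .appR (downgrade n 1) (.inr (.inr (.inr (.inr (.inl (.inl (emulateC n C)))))))
  | .inr C => .appR (downgrade n 1) (.inr (.inr (.inr (.inr (.inl (.inr (emulateC n C)))))))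
  | .caseS C t₁ t₂ => .caseS (.appR (caseSumU n) (.appR (upgrade n 1) (emulateC n C)))
      (emulate n t₁) (emulate n t₂)
  | .caseL t C t₂ => .caseL (.app (caseSumU n) (.app (upgrade n 1) (emulate n t)))
      (emulateC n C) (emulate n t₂)
  | .caseR t t₁ C => .caseR (.app (caseSumU n) (.app (upgrade n 1) (emulate n t)))
      (emulate n t₁) (emulateC n C)
  | .seqL C t => .seqL (.appR (caseUnitU n) (.appR (upgrade n 1) (emulateC n C))) (emulate n t)
  | .seqR t C => .seqR (.app (caseUnitU n) (.app (upgrade n 1) (emulate n t))) (emulateC n C)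
  | .tifC C t₁ t₂ => .tifC (.appR (caseBoolU n) (.appR (upgrade n 1) (emulateC n C)))
      (emulate n t₁) (emulate n t₂)
  | .tifT t C t₂ => .tifT (.app (caseBoolU n) (.app (upgrade n 1) (emulate n t)))
      (emulateC n C) (emulate n t₂)
  | .tifF t t₁ C => .tifF (.app (caseBoolU n) (.app (upgrade n 1) (emulate n t)))
      (emulate n t₁) (emulateC n C)

/-- the approximate back-translation `⟨⟨C̲⟩⟩_{τ;m} := emulate_{m+1}(C̲)[inject_{τ;m} ·]`,
as an operation plugging a λτ term into the back-translated context. -/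
def backtrPlug (τ : Ty) (m : ℕ) (C : UPC) (t : STm) : STm :=
  (emulateC (m+1) C).plug (.app (injectTm m τ) t)

end FAC
namespace FAC

/-! ### Renaming and substitution lemmas -/

theorem liftR_ext {f g : ℕ → ℕ} (h : ∀ n, f n = g n) : ∀ n, liftR f n = liftR g n
  | 0 => rfl
  | n+1 => by simp [liftR, h]

theorem STm.rename_ext : ∀ (t : STm) (f g : ℕ → ℕ), (∀ n, f n = g n) →
    t.rename f = t.rename g := by
  intro t
  induction t <;> intro f g h <;> simp only [STm.rename] <;>
    first | rfl | (congr 1 <;> solve_by_elim [liftR_ext])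

theorem UTm.rename_ext : ∀ (t : UTm) (f g : ℕ → ℕ), (∀ n, f n = g n) →
    t.rename f = t.rename g := by
  intro t
  induction t <;> intro f g h <;> simp only [UTm.rename] <;>
    first | rfl | (congr 1 <;> solve_by_elim [liftR_ext])

theorem liftS_ext {σ σ' : ℕ → STm} (h : ∀ n, σ n = σ' n) : ∀ n, liftS σ n = liftS σ' n
  | 0 => rfl
  | n+1 => by simp [liftS, h]

theorem liftU_ext {σ σ' : ℕ → UTm} (h : ∀ n, σ n = σ' n) : ∀ n, liftU σ n = liftU σ' n
  | 0 => rfl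
  | n+1 => by simp [liftU, h]

theorem STm.subst_ext : ∀ (t : STm) (σ σ' : ℕ → STm), (∀ n, σ n = σ' n) →
    t.subst σ = t.subst σ' := by
  intro t
  induction t <;> intro σ σ' h <;> simp only [STm.subst] <;>
    first | rfl | (congr 1 <;> solve_by_elim [liftS_ext])

theorem UTm.subst_ext : ∀ (t : UTm) (σ σ' : ℕ → UTm), (∀ n, σ n = σ' n) →
    t.subst σ = t.subst σ' := by
  intro t
  induction t <;> intro σ σ' h <;> simp only [UTm.subst] <;>
    first | rfl | (congr 1 <;> solve_by_elim [liftU_ext])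

theorem liftR_comp (f g : ℕ → ℕ) : ∀ n, liftR g (liftR f n) = liftR (fun m => g (f m)) n
  | 0 => rfl
  | _+1 => rfl

theorem STm.rename_rename : ∀ (t : STm) (f g : ℕ → ℕ),
    (t.rename f).rename g = t.rename (fun n => g (f n)) := by
  intro t
  induction t <;> intro f g <;> simp only [STm.rename] <;>
    first
    | rfl
    | (congr 1 <;> first
        | solve_by_elim
        | (simp only [*]; exact STm.rename_ext _ _ _ (liftR_comp f g)))

theorem UTm.rename_rename : ∀ (t : UTm) (f g : ℕ → ℕ),
    (t.rename f).rename g = t.rename (fun n => g (f n)) := by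
  intro t
  induction t <;> intro f g <;> simp only [UTm.rename] <;>
    first
    | rfl
    | (congr 1 <;> first
        | solve_by_elim
        | (simp only [*]; exact UTm.rename_ext _ _ _ (liftR_comp f g)))

theorem liftS_renameL (σ : ℕ → STm) (f : ℕ → ℕ) :
    ∀ n, liftS σ (liftR f n) = liftS (fun m => σ (f m)) n
  | 0 => rfl
  | _+1 => rfl

theorem liftU_renameL (σ : ℕ → UTm) (f : ℕ → ℕ) :
    ∀ n, liftU σ (liftR f n) = liftU (fun m => σ (f m)) n
  | 0 => rfl
  | _+1 => rfl

theorem STm.subst_rename : ∀ (t : STm) (f : ℕ → ℕ) (σ : ℕ → STm),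
    (t.rename f).subst σ = t.subst (fun n => σ (f n)) := by
  intro t
  induction t <;> intro f σ <;> simp only [STm.rename, STm.subst] <;>
    first
    | rfl
    | (congr 1 <;> first
        | solve_by_elim
        | (simp only [*]; exact STm.subst_ext _ _ _ (liftS_renameL σ f)))

theorem UTm.subst_rename : ∀ (t : UTm) (f : ℕ → ℕ) (σ : ℕ → UTm),
    (t.rename f).subst σ = t.subst (fun n => σ (f n)) := by
  intro t
  induction t <;> intro f σ <;> simp only [UTm.rename, UTm.subst] <;>
    first
    | rfl
    | (congr 1 <;> first
        | solve_by_elim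
        | (simp only [*]; exact UTm.subst_ext _ _ _ (liftU_renameL σ f)))

theorem liftS_renameR (σ : ℕ → STm) (f : ℕ → ℕ) :
    ∀ n, (liftS σ n).rename (liftR f) = liftS (fun m => (σ m).rename f) n
  | 0 => rfl
  | n+1 => by
      show ((σ n).rename Nat.succ).rename (liftR f) = ((σ n).rename f).rename Nat.succ
      rw [STm.rename_rename, STm.rename_rename]
      exact STm.rename_ext _ _ _ fun m => rfl

theorem liftU_renameR (σ : ℕ → UTm) (f : ℕ → ℕ) :
    ∀ n, (liftU σ n).rename (liftR f) = liftU (fun m => (σ m).rename f) n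
  | 0 => rfl
  | n+1 => by
      show ((σ n).rename Nat.succ).rename (liftR f) = ((σ n).rename f).rename Nat.succ
      rw [UTm.rename_rename, UTm.rename_rename]
      exact UTm.rename_ext _ _ _ fun m => rfl

theorem STm.rename_subst : ∀ (t : STm) (σ : ℕ → STm) (f : ℕ → ℕ),
    (t.subst σ).rename f = t.subst (fun n => (σ n).rename f) := by
  intro t
  induction t <;> intro σ f <;> simp only [STm.rename, STm.subst] <;>
    first
    | rfl
    | (congr 1 <;> first
        | solve_by_elim
        | (simp only [*]; exact STm.subst_ext _ _ _ (liftS_renameR σ f)))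

theorem UTm.rename_subst : ∀ (t : UTm) (σ : ℕ → UTm) (f : ℕ → ℕ),
    (t.subst σ).rename f = t.subst (fun n => (σ n).rename f) := by
  intro t
  induction t <;> intro σ f <;> simp only [UTm.rename, UTm.subst] <;>
    first
    | rfl
    | (congr 1 <;> first
        | solve_by_elim
        | (simp only [*]; exact UTm.subst_ext _ _ _ (liftU_renameR σ f)))

theorem liftS_comp (σ σ' : ℕ → STm) :
    ∀ n, (liftS σ n).subst (liftS σ') = liftS (fun m => (σ m).subst σ') n
  | 0 => rfl
  | n+1 => by
      show ((σ n).rename Nat.succ).subst (liftS σ') = ((σ n).subst σ').rename Nat.succ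
      rw [STm.subst_rename, STm.rename_subst]
      exact STm.subst_ext _ _ _ fun m => rfl

theorem liftU_comp (σ σ' : ℕ → UTm) :
    ∀ n, (liftU σ n).subst (liftU σ') = liftU (fun m => (σ m).subst σ') n
  | 0 => rfl
  | n+1 => by
      show ((σ n).rename Nat.succ).subst (liftU σ') = ((σ n).subst σ').rename Nat.succ
      rw [UTm.subst_rename, UTm.rename_subst]
      exact UTm.subst_ext _ _ _ fun m => rfl

theorem STm.subst_subst : ∀ (t : STm) (σ σ' : ℕ → STm),
    (t.subst σ).subst σ' = t.subst (fun n => (σ n).subst σ') := by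
  intro t
  induction t <;> intro σ σ' <;> simp only [STm.subst] <;>
    first
    | rfl
    | (congr 1 <;> first
        | solve_by_elim
        | (simp only [*]; exact STm.subst_ext _ _ _ (liftS_comp σ σ')))

theorem UTm.subst_subst : ∀ (t : UTm) (σ σ' : ℕ → UTm),
    (t.subst σ).subst σ' = t.subst (fun n => (σ n).subst σ') := by
  intro t
  induction t <;> intro σ σ' <;> simp only [UTm.subst] <;>
    first
    | rfl
    | (congr 1 <;> first
        | solve_by_elim
        | (simp only [*]; exact UTm.subst_ext _ _ _ (liftU_comp σ σ')))

theorem liftS_var : ∀ n, liftS STm.var n = STm.var n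
  | 0 => rfl
  | _+1 => rfl

theorem liftU_var : ∀ n, liftU UTm.var n = UTm.var n
  | 0 => rfl
  | _+1 => rfl

theorem STm.subst_var : ∀ t : STm, t.subst STm.var = t := by
  intro t
  induction t <;> simp only [STm.subst] <;>
    first
    | rfl
    | (congr 1 <;> first
        | solve_by_elim
        | (rw [STm.subst_ext _ _ _ liftS_var]; solve_by_elim))

theorem UTm.subst_var : ∀ t : UTm, t.subst UTm.var = t := by
  intro t
  induction t <;> simp only [UTm.subst] <;>
    first
    | rfl
    | (congr 1 <;> first
        | solve_by_elim
        | (rw [UTm.subst_ext _ _ _ liftU_var]; solve_by_elim))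

end FAC
namespace FAC

/-! ### Typing lemmas -/

theorem getElem?_lt {α} {l : List α} {n : ℕ} {a : α} (h : l[n]? = some a) : n < l.length := by
  by_contra hc
  push_neg at hc
  rw [List.getElem?_eq_none hc] at h
  cases h

theorem HasTy.rename {Γ t τ} (h : HasTy Γ t τ) :
    ∀ {Δ : List Ty} {f : ℕ → ℕ}, (∀ n τ', Γ[n]? = some τ' → Δ[f n]? = some τ') →
    HasTy Δ (t.rename f) τ := by
  induction h <;> intro Δ f hf <;> simp only [STm.rename] <;>
    constructor <;>
    first
      | solve_by_elim
      | (apply_assumption; intro n τ' hn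
         cases n with
         | zero => simpa [liftR] using hn
         | succ n =>
             simp only [List.getElem?_cons_succ] at hn
             simpa [liftR] using hf n τ' hn)

theorem HasTy.subst {Γ t τ} (h : HasTy Γ t τ) :
    ∀ {Δ : List Ty} {σ : ℕ → STm}, (∀ n τ', Γ[n]? = some τ' → HasTy Δ (σ n) τ') →
    HasTy Δ (t.subst σ) τ := by
  induction h with
  | var h => intro Δ σ hσ; exact hσ _ _ h
  | lam _ ih =>
      intro Δ σ hσ
      exact HasTy.lam (ih (fun n τ' hn => by
        cases n with
        | zero => exact HasTy.var (by simpa using hn)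
        | succ n =>
            exact (hσ n τ' (by simpa using hn)).rename fun m τ'' hm => by simpa using hm))
  | caseOf _ _ _ ih ih₁ ih₂ =>
      intro Δ σ hσ
      refine HasTy.caseOf (ih hσ) (ih₁ ?_) (ih₂ ?_) <;>
        · intro n τ' hn
          cases n with
          | zero => exact HasTy.var (by simpa using hn)
          | succ n =>
              exact (hσ n τ' (by simpa using hn)).rename fun m τ'' hm => by simpa using hm
  | _ => intro Δ σ hσ; constructor <;> solve_by_elim

theorem liftR_id : ∀ n, liftR (fun n => n) n = n
  | 0 => rfl
  | _+1 => rfl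

theorem STm.rename_id : ∀ t : STm, t.rename (fun n => n) = t := by
  intro t
  induction t <;> simp only [STm.rename] <;>
    first
    | rfl
    | (congr 1 <;> first
        | solve_by_elim
        | (rw [STm.rename_ext _ _ (fun n => n) liftR_id]; solve_by_elim))

theorem HasTy.weaken {t τ Δ} (h : HasTy [] t τ) : HasTy Δ t τ := by
  have := h.rename (Δ := Δ) (f := fun n => n) (fun n τ' hn => by simp at hn)
  rwa [STm.rename_id] at this

theorem HasTy.rename_eq {Γ t τ} (h : HasTy Γ t τ) :
    ∀ {f : ℕ → ℕ}, (∀ n, n < Γ.length → f n = n) → t.rename f = t := by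
  induction h <;> intro f hf <;> simp only [STm.rename] <;>
    first
      | rfl
      | (congr 1 <;>
         first
          | (apply_assumption; exact hf)
          | (apply_assumption
             intro n hn
             cases n with
             | zero => rfl
             | succ n => simp only [liftR]; rw [hf n (by simpa using hn)])
          | (apply hf; exact getElem?_lt ‹_›))

theorem HasTy.subst_eq {Γ t τ} (h : HasTy Γ t τ) :
    ∀ {σ : ℕ → STm}, (∀ n, n < Γ.length → σ n = .var n) → t.subst σ = t := by
  induction h <;> intro σ hσ <;> simp only [STm.subst] <;>
    first
      | rfl
      | (congr 1 <;>
         first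
          | (apply_assumption; exact hσ)
          | (apply_assumption
             intro n hn
             cases n with
             | zero => rfl
             | succ n => simp only [liftS]; rw [hσ n (by simpa using hn)]; rfl)
          | (apply hσ; exact getElem?_lt ‹_›))

theorem HasTy.closed_rename {t τ} (h : HasTy [] t τ) (f : ℕ → ℕ) : t.rename f = t :=
  h.rename_eq fun n hn => by simp at hn

theorem HasTy.closed_subst {t τ} (h : HasTy [] t τ) (σ : ℕ → STm) : t.subst σ = t :=
  h.subst_eq fun n hn => by simp at hn


/-! ### Well-scopedness lemmas -/

theorem UTm.ws_mono : ∀ (t : UTm) {n m : ℕ}, t.ws n → n ≤ m → t.ws m := by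
  intro t
  induction t with
    (intro n m h hnm <;> simp only [UTm.ws] at h ⊢)
  | var k => omega
  | lam t ih => exact ih h (by omega)
  | app a b iha ihb => exact ⟨iha h.1 hnm, ihb h.2 hnm⟩
  | pair a b iha ihb => exact ⟨iha h.1 hnm, ihb h.2 hnm⟩
  | seq a b iha ihb => exact ⟨iha h.1 hnm, ihb h.2 hnm⟩
  | p1 t ih => exact ih h hnm
  | p2 t ih => exact ih h hnm
  | inl t ih => exact ih h hnm
  | inr t ih => exact ih h hnm
  | caseOf t a b iht iha ihb =>
      exact ⟨iht h.1 hnm, iha h.2.1 (by omega), ihb h.2.2 (by omega)⟩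
  | tif t a b iht iha ihb => exact ⟨iht h.1 hnm, iha h.2.1 hnm, ihb h.2.2 hnm⟩
  | _ => trivial

theorem liftR_lt {f : ℕ → ℕ} {n m : ℕ} (hf : ∀ i, i < n → f i < m) :
    ∀ i, i < n+1 → liftR f i < m+1
  | 0, _ => Nat.succ_pos m
  | i+1, hi => Nat.succ_lt_succ (hf i (Nat.lt_of_succ_lt_succ hi))

theorem UTm.ws_rename : ∀ (t : UTm) {n m : ℕ} {f : ℕ → ℕ}, t.ws n →
    (∀ i, i < n → f i < m) → (t.rename f).ws m := by
  intro t
  induction t with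
    (intro n m f h hf <;> simp only [UTm.ws, UTm.rename] at h ⊢)
  | var k => exact hf _ h
  | lam t ih => exact ih h (liftR_lt hf)
  | app a b iha ihb => exact ⟨iha h.1 hf, ihb h.2 hf⟩
  | pair a b iha ihb => exact ⟨iha h.1 hf, ihb h.2 hf⟩
  | seq a b iha ihb => exact ⟨iha h.1 hf, ihb h.2 hf⟩
  | p1 t ih => exact ih h hf
  | p2 t ih => exact ih h hf
  | inl t ih => exact ih h hf
  | inr t ih => exact ih h hf
  | caseOf t a b iht iha ihb =>
      exact ⟨iht h.1 hf, iha h.2.1 (liftR_lt hf), ihb h.2.2 (liftR_lt hf)⟩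
  | tif t a b iht iha ihb => exact ⟨iht h.1 hf, iha h.2.1 hf, ihb h.2.2 hf⟩
  | _ => trivial

theorem liftU_ws {σ : ℕ → UTm} {n m : ℕ} (hσ : ∀ i, i < n → (σ i).ws m) :
    ∀ i, i < n+1 → (liftU σ i).ws (m+1)
  | 0, _ => by simp [liftU, UTm.ws]
  | i+1, hi => UTm.ws_rename _ (hσ i (by omega)) fun j hj => Nat.succ_lt_succ hj

theorem UTm.ws_subst : ∀ (t : UTm) {n m : ℕ} {σ : ℕ → UTm}, t.ws n →
    (∀ i, i < n → (σ i).ws m) → (t.subst σ).ws m := by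
  intro t
  induction t with
    (intro n m σ h hσ <;> simp only [UTm.ws, UTm.subst] at h ⊢)
  | var k => exact hσ _ h
  | lam t ih => exact ih h (liftU_ws hσ)
  | app a b iha ihb => exact ⟨iha h.1 hσ, ihb h.2 hσ⟩
  | pair a b iha ihb => exact ⟨iha h.1 hσ, ihb h.2 hσ⟩
  | seq a b iha ihb => exact ⟨iha h.1 hσ, ihb h.2 hσ⟩
  | p1 t ih => exact ih h hσ
  | p2 t ih => exact ih h hσ
  | inl t ih => exact ih h hσ
  | inr t ih => exact ih h hσ
  | caseOf t a b iht iha ihb =>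
      exact ⟨iht h.1 hσ, iha h.2.1 (liftU_ws hσ), ihb h.2.2 (liftU_ws hσ)⟩
  | tif t a b iht iha ihb => exact ⟨iht h.1 hσ, iha h.2.1 hσ, ihb h.2.2 hσ⟩
  | _ => trivial

theorem liftR_eq {f : ℕ → ℕ} {n : ℕ} (hf : ∀ i, i < n → f i = i) :
    ∀ i, i < n+1 → liftR f i = i
  | 0, _ => rfl
  | i+1, hi => by simp only [liftR]; rw [hf i (by omega)]

theorem UTm.ws_rename_eq : ∀ (t : UTm) {n : ℕ} {f : ℕ → ℕ}, t.ws n →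
    (∀ i, i < n → f i = i) → t.rename f = t := by
  intro t
  induction t with
    (intro n f h hf <;> simp only [UTm.ws, UTm.rename] at h ⊢)
  | var k => exact congrArg _ (hf _ h)
  | lam t ih => exact congrArg _ (ih h (liftR_eq hf))
  | app a b iha ihb => rw [iha h.1 hf, ihb h.2 hf]
  | pair a b iha ihb => rw [iha h.1 hf, ihb h.2 hf]
  | seq a b iha ihb => rw [iha h.1 hf, ihb h.2 hf]
  | p1 t ih => exact congrArg _ (ih h hf)
  | p2 t ih => exact congrArg _ (ih h hf)
  | inl t ih => exact congrArg _ (ih h hf)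
  | inr t ih => exact congrArg _ (ih h hf)
  | caseOf t a b iht iha ihb =>
      rw [iht h.1 hf, iha h.2.1 (liftR_eq hf), ihb h.2.2 (liftR_eq hf)]
  | tif t a b iht iha ihb => rw [iht h.1 hf, iha h.2.1 hf, ihb h.2.2 hf]
  | _ => trivial

theorem liftU_eq {σ : ℕ → UTm} {n : ℕ} (hσ : ∀ i, i < n → σ i = .var i) :
    ∀ i, i < n+1 → liftU σ i = .var i
  | 0, _ => rfl
  | i+1, hi => by simp only [liftU]; rw [hσ i (by omega)]; rfl

theorem UTm.ws_subst_eq : ∀ (t : UTm) {n : ℕ} {σ : ℕ → UTm}, t.ws n →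
    (∀ i, i < n → σ i = .var i) → t.subst σ = t := by
  intro t
  induction t with
    (intro n σ h hσ <;> simp only [UTm.ws, UTm.subst] at h ⊢)
  | var k => exact hσ _ h
  | lam t ih => exact congrArg _ (ih h (liftU_eq hσ))
  | app a b iha ihb => rw [iha h.1 hσ, ihb h.2 hσ]
  | pair a b iha ihb => rw [iha h.1 hσ, ihb h.2 hσ]
  | seq a b iha ihb => rw [iha h.1 hσ, ihb h.2 hσ]
  | p1 t ih => exact congrArg _ (ih h hσ)
  | p2 t ih => exact congrArg _ (ih h hσ)
  | inl t ih => exact congrArg _ (ih h hσ)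
  | inr t ih => exact congrArg _ (ih h hσ)
  | caseOf t a b iht iha ihb =>
      rw [iht h.1 hσ, iha h.2.1 (liftU_eq hσ), ihb h.2.2 (liftU_eq hσ)]
  | tif t a b iht iha ihb => rw [iht h.1 hσ, iha h.2.1 hσ, ihb h.2.2 hσ]
  | _ => trivial

theorem UTm.closed_rename {t : UTm} (h : t.ws 0) (f : ℕ → ℕ) : t.rename f = t :=
  t.ws_rename_eq h fun i hi => by omega

theorem UTm.closed_subst {t : UTm} (h : t.ws 0) (σ : ℕ → UTm) : t.subst σ = t :=
  t.ws_subst_eq h fun i hi => by omega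

end FAC
namespace FAC

/-! ### erase lemmas -/

theorem zcomb_ws : ∀ {n}, Zcomb.ws n := by
  intro n; simp [Zcomb, UTm.ws]

theorem erase_rename : ∀ (t : STm) (f : ℕ → ℕ), erase (t.rename f) = (erase t).rename f := by
  intro t
  induction t <;> intro f <;>
    simp only [erase, STm.rename, UTm.rename] <;>
    first
    | rfl
    | (congr 1 <;> solve_by_elim)
    | (rw [UTm.closed_rename zcomb_ws] <;> congr 1 <;> solve_by_elim)

theorem erase_liftS (σ : ℕ → STm) : ∀ n, erase (liftS σ n) = liftU (fun m => erase (σ m)) n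
  | 0 => rfl
  | n+1 => by
      show erase ((σ n).rename Nat.succ) = (erase (σ n)).rename Nat.succ
      rw [erase_rename]

theorem erase_subst : ∀ (t : STm) (σ : ℕ → STm),
    erase (t.subst σ) = (erase t).subst (fun n => erase (σ n)) := by
  intro t
  induction t <;> intro σ <;>
    simp only [erase, STm.subst, UTm.subst] <;>
    first
    | rfl
    | (congr 1 <;> first
        | solve_by_elim
        | (simp only [*]; exact UTm.subst_ext _ _ _ fun n => erase_liftS σ n))
    | (rw [UTm.closed_subst zcomb_ws] <;> congr 1 <;> solve_by_elim)

theorem erase_ws {Γ t τ} (h : HasTy Γ t τ) : (erase t).ws Γ.length := by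
  induction h with
  | fixt _ ih => exact ⟨zcomb_ws, ih⟩
  | _ =>
      simp only [erase, UTm.ws] <;>
        first
        | trivial
        | solve_by_elim [getElem?_lt]
        | ((repeat' constructor) <;> solve_by_elim)

/-! ### Step lemmas -/

theorem SIsVal.not_step {v : STm} (hv : SIsVal v) : ∀ {t}, ¬ SStep v t := by
  induction hv with
  | pair h1 h2 ih1 ih2 =>
      intro t hs
      cases hs with
      | pair1 h => exact ih1 h
      | pair2 _ h => exact ih2 h
  | inl h ih => intro t hs; cases hs with | inlC h => exact ih h
  | inr h ih => intro t hs; cases hs with | inrC h => exact ih h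
  | _ => intro t hs; cases hs

theorem UIsVal.not_step {v : UTm} (hv : UIsVal v) : ∀ {t}, ¬ UStep v t := by
  induction hv with
  | pair h1 h2 ih1 ih2 =>
      intro t hs
      cases hs with
      | pair1 h => exact ih1 h
      | pair2 _ h => exact ih2 h
      | pairW1 => cases h1
      | pairW2 _ => cases h2
  | inl h ih => intro t hs; cases hs with
      | inlC h' => exact ih h'
      | inlW => cases h
  | inr h ih => intro t hs; cases hs with
      | inrC h' => exact ih h'
      | inrW => cases h
  | _ => intro t hs; cases hs

end FAC
namespace FAC

theorem SStep.det {t a b : STm} (h1 : SStep t a) (h2 : SStep t b) : a = b := by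
  induction h1 generalizing b <;> cases h2 <;> try rfl
  all_goals
    first
    | (congr 1 <;> solve_by_elim)
    | (exfalso;
       solve_by_elim [SIsVal.not_step, SIsVal.lam, SIsVal.unit, SIsVal.tt, SIsVal.ff,
         SIsVal.inl, SIsVal.inr, SIsVal.pair])
    | (exact absurd ‹SStep (STm.lam _ _) _› SIsVal.lam.not_step)
    | (exact absurd ‹SStep (STm.lam _ _) _› SIsVal.lam.not_step |>.elim)

theorem UStep.not_wrong {t : UTm} : ¬ UStep .wrong t := fun h => by cases h

theorem UIsVal.not_wrong : ¬ UIsVal .wrong := fun h => by cases h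

theorem UStep.det {t a b : UTm} (h1 : UStep t a) (h2 : UStep t b) : a = b := by
  induction h1 generalizing b <;> cases h2 <;> try rfl
  all_goals
    first
    | (congr 1 <;> solve_by_elim)
    | (exfalso;
       solve_by_elim [UIsVal.not_step, UIsVal.lam, UIsVal.unit, UIsVal.tt, UIsVal.ff,
         UIsVal.inl, UIsVal.inr, UIsVal.pair, UStep.not_wrong, UIsVal.not_wrong])

end FAC
namespace FAC

/-! ### Multi-step lemmas -/

theorem SStepN.trans : ∀ {m n : ℕ} {t₁ t₂ t₃ : STm},
    SStepN m t₁ t₂ → SStepN n t₂ t₃ → SStepN (m + n) t₁ t₃ := by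
  intro m
  induction m with
  | zero => intro n t₁ t₂ t₃ h1 h2; cases h1; simpa using h2
  | succ m ih =>
      intro n t₁ t₂ t₃ h1 h2
      obtain ⟨t', hs, h1'⟩ := h1
      rw [show m + 1 + n = (m + n) + 1 by omega]
      exact ⟨t', hs, ih h1' h2⟩

theorem UStepN.trans : ∀ {m n : ℕ} {t₁ t₂ t₃ : UTm},
    UStepN m t₁ t₂ → UStepN n t₂ t₃ → UStepN (m + n) t₁ t₃ := by
  intro m
  induction m with
  | zero => intro n t₁ t₂ t₃ h1 h2; cases h1; simpa using h2
  | succ m ih =>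
      intro n t₁ t₂ t₃ h1 h2
      obtain ⟨t', hs, h1'⟩ := h1
      rw [show m + 1 + n = (m + n) + 1 by omega]
      exact ⟨t', hs, ih h1' h2⟩

theorem SStep.stepN {t t' : STm} (h : SStep t t') : SStepN 1 t t' := ⟨t', h, rfl⟩
theorem UStep.stepN {t t' : UTm} (h : UStep t t') : UStepN 1 t t' := ⟨t', h, rfl⟩

theorem SHalts.prepend {m : ℕ} {t t' : STm} (h : SStepN m t t') (h' : SHalts t') : SHalts t := by
  obtain ⟨n, v, hn, hv⟩ := h'
  exact ⟨m + n, v, h.trans hn, hv⟩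

theorem UHalts.prepend {m : ℕ} {t t' : UTm} (h : UStepN m t t') (h' : UHalts t') : UHalts t := by
  obtain ⟨n, v, hn, hv⟩ := h'
  exact ⟨m + n, v, h.trans hn, hv⟩

/-- splitting a terminating reduction sequence along a prefix -/
theorem sstepN_val_split : ∀ {i : ℕ} {ts ts' : STm}, SStepN i ts ts' →
    ∀ {m : ℕ} {v : STm}, SIsVal v → SStepN m ts v → i ≤ m ∧ SStepN (m - i) ts' v := by
  intro i
  induction i with
  | zero => intro ts ts' h m v hv hm; cases h; simpa using hm
  | succ i ih =>
      intro ts ts' h m v hv hm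
      obtain ⟨t₁, hs, h'⟩ := h
      match m, hm with
      | 0, hm => exact absurd (hm ▸ hs) hv.not_step
      | m+1, ⟨t₂, hs₂, hm'⟩ =>
          obtain ⟨h1, h2⟩ := ih h' hv (hs.det hs₂ ▸ hm')
          exact ⟨by omega, by simpa [Nat.succ_sub_succ] using h2⟩

theorem ustepN_val_split : ∀ {i : ℕ} {ts ts' : UTm}, UStepN i ts ts' →
    ∀ {m : ℕ} {v : UTm}, UIsVal v → UStepN m ts v → i ≤ m ∧ UStepN (m - i) ts' v := by
  intro i
  induction i with
  | zero => intro ts ts' h m v hv hm; cases h; simpa using hm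
  | succ i ih =>
      intro ts ts' h m v hv hm
      obtain ⟨t₁, hs, h'⟩ := h
      match m, hm with
      | 0, hm => exact absurd (hm ▸ hs) hv.not_step
      | m+1, ⟨t₂, hs₂, hm'⟩ =>
          obtain ⟨h1, h2⟩ := ih h' hv (hs.det hs₂ ▸ hm')
          exact ⟨by omega, by simpa [Nat.succ_sub_succ] using h2⟩

/-! ### Plugging and composition of evaluation contexts -/

theorem SEC.plug_step : ∀ (C : SEC), C.ok → ∀ {t t' : STm}, SStep t t' →
    SStep (C.plug t) (C.plug t') := by
  intro C
  induction C <;> intro hC t t' h <;> simp only [SEC.ok] at hC <;>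
    simp only [SEC.plug] <;>
    first
    | exact h
    | (constructor <;> solve_by_elim [And.left, And.right])

theorem UEC.plug_step : ∀ (C : UEC), C.ok → ∀ {t t' : UTm}, UStep t t' →
    UStep (C.plug t) (C.plug t') := by
  intro C
  induction C <;> intro hC t t' h <;> simp only [UEC.ok] at hC <;>
    simp only [UEC.plug] <;>
    first
    | exact h
    | (constructor <;> solve_by_elim [And.left, And.right])

theorem SEC.plug_stepN (C : SEC) (hC : C.ok) : ∀ {m : ℕ} {t t' : STm}, SStepN m t t' →
    SStepN m (C.plug t) (C.plug t') := by
  intro m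
  induction m with
  | zero => intro t t' h; cases h; rfl
  | succ m ih =>
      intro t t' h
      obtain ⟨t₁, hs, h'⟩ := h
      exact ⟨C.plug t₁, C.plug_step hC hs, ih h'⟩

theorem UEC.plug_stepN (C : UEC) (hC : C.ok) : ∀ {m : ℕ} {t t' : UTm}, UStepN m t t' →
    UStepN m (C.plug t) (C.plug t') := by
  intro m
  induction m with
  | zero => intro t t' h; cases h; rfl
  | succ m ih =>
      intro t t' h
      obtain ⟨t₁, hs, h'⟩ := h
      exact ⟨C.plug t₁, C.plug_step hC hs, ih h'⟩

def SEC.comp : SEC → SEC → SEC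
  | .hole, D => D
  | .appL C u, D => .appL (C.comp D) u
  | .appR v C, D => .appR v (C.comp D)
  | .pairL C u, D => .pairL (C.comp D) u
  | .pairR v C, D => .pairR v (C.comp D)
  | .p1 C, D => .p1 (C.comp D)
  | .p2 C, D => .p2 (C.comp D)
  | .inl C, D => .inl (C.comp D)
  | .inr C, D => .inr (C.comp D)
  | .caseOf C a b, D => .caseOf (C.comp D) a b
  | .seq C u, D => .seq (C.comp D) u
  | .tif C a b, D => .tif (C.comp D) a b
  | .fixt a b C, D => .fixt a b (C.comp D)

def UEC.comp : UEC → UEC → UEC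
  | .hole, D => D
  | .appL C u, D => .appL (C.comp D) u
  | .appR v C, D => .appR v (C.comp D)
  | .pairL C u, D => .pairL (C.comp D) u
  | .pairR v C, D => .pairR v (C.comp D)
  | .p1 C, D => .p1 (C.comp D)
  | .p2 C, D => .p2 (C.comp D)
  | .inl C, D => .inl (C.comp D)
  | .inr C, D => .inr (C.comp D)
  | .caseOf C a b, D => .caseOf (C.comp D) a b
  | .seq C u, D => .seq (C.comp D) u
  | .tif C a b, D => .tif (C.comp D) a b

theorem SEC.comp_plug : ∀ (C D : SEC) (t : STm), (C.comp D).plug t = C.plug (D.plug t) := by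
  intro C D t
  induction C <;> simp [SEC.comp, SEC.plug, *]

theorem UEC.comp_plug : ∀ (C D : UEC) (t : UTm), (C.comp D).plug t = C.plug (D.plug t) := by
  intro C D t
  induction C <;> simp [UEC.comp, UEC.plug, *]

theorem SEC.comp_ok : ∀ {C D : SEC}, C.ok → D.ok → (C.comp D).ok := by
  intro C D hC hD
  induction C <;> simp_all [SEC.comp, SEC.ok]

theorem UEC.comp_ok : ∀ {C D : UEC}, C.ok → D.ok → (C.comp D).ok := by
  intro C D hC hD
  induction C <;> simp_all [UEC.comp, UEC.ok]

/-! ### Observation lemmas -/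

theorem obs_mono {dir : Dir} {k k' : ℕ} {ts tu} (h : Obs dir k' ts tu) (hk : k ≤ k') :
    Obs dir k ts tu := by
  cases dir with
  | lt => exact fun ⟨m, hm, v, hv, hval⟩ => h ⟨m, le_trans hm hk, v, hv, hval⟩
  | gt => exact fun ⟨m, hm, v, hv, hval⟩ => h ⟨m, le_trans hm hk, v, hv, hval⟩

theorem obs_antired {dir : Dir} {k is iu : ℕ} {ts ts' tu tu'}
    (hs : SStepN is ts ts') (hu : UStepN iu tu tu') (his : 1 ≤ is) (hiu : 1 ≤ iu)
    (h : ∀ j, j + 1 = k → Obs dir j ts' tu') : Obs dir k ts tu := by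
  cases dir with
  | lt =>
      rintro ⟨m, hm, v, hv, hval⟩
      obtain ⟨h1, h2⟩ := sstepN_val_split hs hval hv
      have hk : 1 ≤ k := le_trans his (le_trans h1 hm)
      have := h (k-1) (by omega) ⟨m - is, by omega, v, h2, hval⟩
      exact UHalts.prepend hu this
  | gt =>
      rintro ⟨m, hm, v, hv, hval⟩
      obtain ⟨h1, h2⟩ := ustepN_val_split hu hval hv
      have hk : 1 ≤ k := le_trans hiu (le_trans h1 hm)
      have := h (k-1) (by omega) ⟨m - iu, by omega, v, h2, hval⟩
      exact SHalts.prepend hs this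

/-- observation directly on related values via a continuation -/
theorem obs_val {dir k ts tu} (hs : SIsVal ts) (hu : UIsVal tu) : Obs dir k ts tu := by
  cases dir with
  | lt => exact fun _ => ⟨0, tu, rfl, hu⟩
  | gt => exact fun _ => ⟨0, ts, rfl, hs⟩

end FAC
namespace FAC

/-! ### Pseudo-type lemmas -/

theorem repEmul_toP : ∀ τ : Ty, repEmul τ.toP = τ := by
  intro τ
  induction τ <;> simp [Ty.toP, repEmul, *]

/-! ### ValRel unfolding -/

theorem valrel_unit {dir k vs vu} : ValRel dir k .unit vs vu ↔
    (HasTy [] vs .unit ∧ vu.ws 0 ∧ vs = .unit ∧ vu = .unit) := by rw [ValRel]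

theorem valrel_bool {dir k vs vu} : ValRel dir k .bool vs vu ↔
    (HasTy [] vs .bool ∧ vu.ws 0 ∧
      ((vs = .tt ∧ vu = .tt) ∨ (vs = .ff ∧ vu = .ff))) := by rw [ValRel]

theorem valrel_prod {dir k a b vs vu} : ValRel dir k (.prod a b) vs vu ↔
    (HasTy [] vs (repEmul (.prod a b)) ∧ vu.ws 0 ∧
      ∃ v₁ v₂ u₁ u₂, vs = .pair v₁ v₂ ∧ vu = .pair u₁ u₂ ∧
        SIsVal v₁ ∧ SIsVal v₂ ∧ UIsVal u₁ ∧ UIsVal u₂ ∧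
        (∀ j, j + 1 ≤ k → ValRel dir j a v₁ u₁ ∧ ValRel dir j b v₂ u₂)) := by rw [ValRel]

theorem valrel_sum {dir k a b vs vu} : ValRel dir k (.sum a b) vs vu ↔
    (HasTy [] vs (repEmul (.sum a b)) ∧ vu.ws 0 ∧
      ((∃ v u, vs = .inl v ∧ vu = .inl u ∧ SIsVal v ∧ UIsVal u ∧
          (∀ j, j + 1 ≤ k → ValRel dir j a v u)) ∨
       (∃ v u, vs = .inr v ∧ vu = .inr u ∧ SIsVal v ∧ UIsVal u ∧
          (∀ j, j + 1 ≤ k → ValRel dir j b v u)))) := by rw [ValRel]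

theorem valrel_arr {dir k a b vs vu} : ValRel dir k (.arr a b) vs vu ↔
    (HasTy [] vs (repEmul (.arr a b)) ∧ vu.ws 0 ∧
      ∃ ts tu, vs = .lam (repEmul a) ts ∧ vu = .lam tu ∧
        ∀ j, j < k → ∀ vs' vu', SIsVal vs' → UIsVal vu' → ValRel dir j a vs' vu' →
          ∀ Cs Cu, SEC.ok Cs → UEC.ok Cu →
            (∀ i, i ≤ j → ∀ ws wu, SIsVal ws → UIsVal wu → ValRel dir i b ws wu →
              Obs dir i (Cs.plug ws) (Cu.plug wu)) →
            Obs dir j (Cs.plug (ts.subst0 vs')) (Cu.plug (tu.subst0 vu'))) := by rw [ValRel]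

/-! ### basic facts about ValRel at embedded types -/

theorem valrel_hasty {dir k vs vu} : ∀ {τ : Ty}, ValRel dir k τ.toP vs vu →
    HasTy [] vs τ := by
  intro τ h
  cases τ with
  | unit => exact (valrel_unit.mp h).1
  | bool => exact (valrel_bool.mp h).1
  | prod a b => simpa [repEmul, repEmul_toP] using (valrel_prod.mp h).1
  | sum a b => simpa [repEmul, repEmul_toP] using (valrel_sum.mp h).1
  | arr a b => simpa [repEmul, repEmul_toP] using (valrel_arr.mp h).1

theorem valrel_ws {dir k vs vu} : ∀ {τ : Ty}, ValRel dir k τ.toP vs vu → vu.ws 0 := by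
  intro τ h
  cases τ <;>
    first
    | exact (valrel_unit.mp h).2.1
    | exact (valrel_bool.mp h).2.1
    | exact (valrel_prod.mp h).2.1
    | exact (valrel_sum.mp h).2.1
    | exact (valrel_arr.mp h).2.1

theorem valrel_val {dir k vs vu} : ∀ {τ : Ty}, ValRel dir k τ.toP vs vu →
    SIsVal vs ∧ UIsVal vu := by
  intro τ h
  cases τ with
  | unit =>
      obtain ⟨-, -, h1, h2⟩ := valrel_unit.mp h
      exact ⟨h1 ▸ .unit, h2 ▸ .unit⟩
  | bool =>
      obtain ⟨-, -, h1 | h1⟩ := valrel_bool.mp h <;> obtain ⟨e1, e2⟩ := h1 <;>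
        subst e1 <;> subst e2
      exacts [⟨.tt, .tt⟩, ⟨.ff, .ff⟩]
  | arr a b =>
      obtain ⟨-, -, ts, tu, e1, e2, -⟩ := valrel_arr.mp h
      subst e1; subst e2
      exact ⟨.lam, .lam⟩
  | prod a b =>
      obtain ⟨-, -, v₁, v₂, u₁, u₂, e1, e2, hv1, hv2, hu1, hu2, -⟩ := valrel_prod.mp h
      subst e1; subst e2
      exact ⟨.pair hv1 hv2, .pair hu1 hu2⟩
  | sum a b =>
      obtain ⟨-, -, ⟨v, u, e1, e2, hv, hu, -⟩ | ⟨v, u, e1, e2, hv, hu, -⟩⟩ := valrel_sum.mp h <;>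
        subst e1 <;> subst e2
      exacts [⟨.inl hv, .inl hu⟩, ⟨.inr hv, .inr hu⟩]

theorem valrel_mono {dir} : ∀ (τ : Ty) {j k vs vu}, j ≤ k →
    ValRel dir k τ.toP vs vu → ValRel dir j τ.toP vs vu := by
  intro τ j k vs vu hjk h
  cases τ with
  | unit => exact valrel_unit.mpr (valrel_unit.mp h)
  | bool => exact valrel_bool.mpr (valrel_bool.mp h)
  | arr a b =>
      obtain ⟨h1, h2, ts, tu, e1, e2, hb⟩ := valrel_arr.mp h
      exact valrel_arr.mpr ⟨h1, h2, ts, tu, e1, e2, fun j' hj' => hb j' (by omega)⟩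
  | prod a b =>
      obtain ⟨h1, h2, v₁, v₂, u₁, u₂, e1, e2, hv1, hv2, hu1, hu2, hrec⟩ := valrel_prod.mp h
      exact valrel_prod.mpr ⟨h1, h2, v₁, v₂, u₁, u₂, e1, e2, hv1, hv2, hu1, hu2,
        fun j' hj' => hrec j' (by omega)⟩
  | sum a b =>
      obtain ⟨h1, h2, hc⟩ := valrel_sum.mp h
      refine valrel_sum.mpr ⟨h1, h2, ?_⟩
      rcases hc with ⟨v, u, e1, e2, hv, hu, hrec⟩ | ⟨v, u, e1, e2, hv, hu, hrec⟩
      · exact Or.inl ⟨v, u, e1, e2, hv, hu, fun j' hj' => hrec j' (by omega)⟩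
      · exact Or.inr ⟨v, u, e1, e2, hv, hu, fun j' hj' => hrec j' (by omega)⟩

/-! ### environment lemmas -/

theorem envrel_mono {dir j k} {Γ : List Ty} {γs γu} (hjk : j ≤ k)
    (h : EnvRel dir k (Γ.map Ty.toP) γs γu) : EnvRel dir j (Γ.map Ty.toP) γs γu := by
  intro i τ hi
  obtain ⟨h1, h2, h3⟩ := h i τ hi
  rw [List.getElem?_map] at hi
  obtain ⟨τ₀, hτ₀, rfl⟩ := Option.map_eq_some_iff.mp hi
  exact ⟨h1, h2, valrel_mono τ₀ hjk h3⟩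

theorem envrel_cons {dir k} {Γ : List Ty} {γs γu vs vu} {τ : Ty}
    (hvs : SIsVal vs) (hvu : UIsVal vu) (hv : ValRel dir k τ.toP vs vu)
    (h : EnvRel dir k (Γ.map Ty.toP) γs γu) :
    EnvRel dir k ((τ.toP :: Γ.map Ty.toP))
      (fun n => match n with | 0 => vs | n+1 => γs n)
      (fun n => match n with | 0 => vu | n+1 => γu n) := by
  intro i τ' hi
  cases i with
  | zero =>
      simp only [List.getElem?_cons_zero, Option.some.injEq] at hi
      subst hi
      exact ⟨hvs, hvu, hv⟩
  | succ i => exact h i τ' (by simpa using hi)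

end FAC
namespace FAC

/-! ### The Z combinator machinery -/

def Zfix (f : UTm) : UTm := .lam (.app (.app (gOf f) (gOf f)) (.var 0))

theorem gOf_ws {f : UTm} (h : f.ws 0) : (gOf f).ws 0 := by
  refine ⟨?_, ?_⟩
  · exact UTm.ws_rename f h fun i hi => by omega
  · simp [UTm.ws]

theorem zfix_ws {f : UTm} (h : f.ws 0) : (Zfix f).ws 0 := by
  refine ⟨⟨?_, ?_⟩, ?_⟩
  · exact UTm.ws_mono _ (gOf_ws h) (by omega)
  · exact UTm.ws_mono _ (gOf_ws h) (by omega)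
  · simp [UTm.ws]

theorem zstep1 {f : UTm} (hf : UIsVal f) : UStep (.app Zcomb f) (.app (gOf f) (gOf f)) :=
  UStep.beta hf

theorem zstep2 {f : UTm} (hws : f.ws 0) :
    UStep (.app (gOf f) (gOf f)) (.app f (Zfix f)) := by
  have h := UStep.beta (t := .app (f.rename Nat.succ)
    (.lam (.app (.app (.var 1) (.var 1)) (.var 0)))) (v := gOf f) UIsVal.lam
  rw [show (UTm.app (f.rename Nat.succ)
      (.lam (.app (.app (.var 1) (.var 1)) (.var 0)))).subst0 (gOf f)
      = .app f (Zfix f) from ?_] at h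
  · exact h
  · show UTm.app ((f.rename Nat.succ).subst _) _ = _
    rw [UTm.subst_rename]
    congr 1
    · exact UTm.closed_subst hws _
    · show UTm.lam (.app (.app ((gOf f).rename Nat.succ) ((gOf f).rename Nat.succ)) (.var 0)) = _
      rw [UTm.closed_rename (gOf_ws hws)]
      rfl

theorem zstepN3 {tb : UTm} (hws : UTm.ws (.lam tb) 0) :
    UStepN 3 (.app Zcomb (.lam tb)) (tb.subst0 (Zfix (.lam tb))) := by
  refine ⟨_, zstep1 UIsVal.lam, _, zstep2 hws, _, UStep.beta UIsVal.lam, rfl⟩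

/-! ### TermRel helper -/

theorem termrel_plug {dir k τ ts tu} (ht : TermRel dir k τ ts tu) {Cs : SEC} {Cu : UEC}
    (oks : Cs.ok) (oku : Cu.ok)
    (h : ∀ i, i ≤ k → ∀ vs vu, SIsVal vs → UIsVal vu → ValRel dir i τ vs vu →
      Obs dir i (Cs.plug vs) (Cu.plug vu)) : Obs dir k (Cs.plug ts) (Cu.plug tu) :=
  ht Cs Cu ⟨oks, oku, h⟩

end FAC
namespace FAC

theorem fix_lob {dir : Dir} {a b : Ty} {tb : STm} {tu : UTm} {i : ℕ}
    (hty : HasTy [] (STm.lam (.arr a b) tb) (.arr (.arr a b) (.arr a b)))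
    (hws : UTm.ws (.lam tu) 0)
    (H : ValRel dir i ((Ty.arr (.arr a b) (.arr a b)).toP) (.lam (.arr a b) tb) (.lam tu)) :
    ∀ j, j < i →
      ValRel dir j ((Ty.arr a b).toP)
        (.lam a (.app (.fixt a b (.lam (.arr a b) tb)) (.var 0)))
        (Zfix (.lam tu)) := by
  intro j
  induction j using Nat.strong_induction_on with
  | _ j IH =>
  intro hj
  obtain ⟨-, -, ts₀, tu₀, hts₀, htu₀, Hb⟩ := valrel_arr.mp H
  rw [repEmul_toP] at hts₀
  have hts : ts₀ = tb := by injection hts₀ with _ h; exact h.symm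
  have htu : tu₀ = tu := by injection htu₀ with h; exact h.symm
  rw [hts, htu] at Hb
  clear hts htu hts₀ htu₀
  have hftyp : HasTy [] (STm.fixt a b (.lam (.arr a b) tb)) (.arr a b) := HasTy.fixt hty
  refine valrel_arr.mpr ⟨?_, zfix_ws hws, .app (.fixt a b (.lam (.arr a b) tb)) (.var 0),
    .app (.app (gOf (.lam tu)) (gOf (.lam tu))) (.var 0),
    by rw [repEmul_toP], rfl, ?_⟩
  · simp only [repEmul, repEmul_toP]
    exact HasTy.lam (HasTy.app hftyp.weaken (HasTy.var (by simp)))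
  intro j' hj' vs' vu' hvs' hvu' hrel Cs Cu oks oku hcond
  have es : (STm.app (.fixt a b (.lam (.arr a b) tb)) (.var 0)).subst0 vs'
      = .app (.fixt a b (.lam (.arr a b) tb)) vs' := by
    show STm.app ((STm.fixt a b (.lam (.arr a b) tb)).subst _) vs' = _
    rw [hftyp.closed_subst]
  have eu : (UTm.app (.app (gOf (.lam tu)) (gOf (.lam tu))) (.var 0)).subst0 vu'
      = .app (.app (gOf (.lam tu)) (gOf (.lam tu))) vu' := by
    show UTm.app (.app ((gOf (.lam tu)).subst _) ((gOf (.lam tu)).subst _)) vu' = _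
    rw [UTm.closed_subst (gOf_ws hws)]
  rw [es, eu]
  have efv : (STm.fixt a b (.lam (.arr a b) tb)).rename Nat.succ
      = .fixt a b (.lam (.arr a b) tb) := hftyp.closed_rename _
  have hsstep : SStep (.app (.fixt a b (.lam (.arr a b) tb)) vs')
      (.app (tb.subst0 (.lam a (.app (.fixt a b (.lam (.arr a b) tb)) (.var 0)))) vs') := by
    have := SStep.app1 (t₂ := vs') (SStep.fixBeta (a := a) (b := b) (t := tb))
    rwa [efv] at this
  have hustep : UStepN 2 (.app (.app (gOf (.lam tu)) (gOf (.lam tu))) vu')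
      (.app (tu.subst0 (Zfix (.lam tu))) vu') :=
    ⟨_, UStep.app1 (zstep2 hws), _, UStep.app1 (UStep.beta UIsVal.lam), rfl⟩
  refine obs_antired (Cs.plug_step oks hsstep).stepN (Cu.plug_stepN oku hustep)
    (by omega) (by omega) ?_
  intro j₂ hj₂
  have hIH := IH j₂ (by omega) (by omega)
  have hmain := Hb j₂ (by omega) _ _ SIsVal.lam UIsVal.lam hIH
    (Cs.comp (.appL .hole vs')) (Cu.comp (.appL .hole vu'))
    (SEC.comp_ok oks trivial) (UEC.comp_ok oku trivial) ?_
  · rw [SEC.comp_plug, UEC.comp_plug] at hmain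
    simp only [SEC.plug, UEC.plug] at hmain; exact hmain
  intro i₂ hi₂ ws wu hwsv hwuv hrelw
  rw [SEC.comp_plug, UEC.comp_plug]
  obtain ⟨-, -, tsw, tuw, ews, ewu, hbw⟩ := valrel_arr.mp hrelw
  subst ews; subst ewu
  simp only [SEC.plug, UEC.plug]
  refine obs_antired (Cs.plug_step oks (SStep.beta hvs')).stepN
    (Cu.plug_step oku (UStep.beta hvu')).stepN (by omega) (by omega) ?_
  intro i₃ hi₃
  exact hbw i₃ (by omega) vs' vu' hvs' hvu' (valrel_mono a (by omega) hrel)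
    Cs Cu oks oku (fun i₄ hi₄ => hcond i₄ (by omega))

end FAC
namespace FAC

theorem subst_lift_subst0_S (b : STm) (γ : ℕ → STm) (v : STm) :
    (b.subst (liftS γ)).subst0 v
      = b.subst (fun n => match n with | 0 => v | n+1 => γ n) := by
  unfold STm.subst0
  rw [STm.subst_subst]
  apply STm.subst_ext
  intro n
  cases n with
  | zero => rfl
  | succ n =>
      show ((γ n).rename Nat.succ).subst _ = γ n
      rw [STm.subst_rename]
      exact (STm.subst_ext _ _ STm.var fun m => rfl).trans (STm.subst_var _)

theorem subst_lift_subst0_U (b : UTm) (γ : ℕ → UTm) (v : UTm) :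
    (b.subst (liftU γ)).subst0 v
      = b.subst (fun n => match n with | 0 => v | n+1 => γ n) := by
  unfold UTm.subst0
  rw [UTm.subst_subst]
  apply UTm.subst_ext
  intro n
  cases n with
  | zero => rfl
  | succ n =>
      show ((γ n).rename Nat.succ).subst _ = γ n
      rw [UTm.subst_rename]
      exact (UTm.subst_ext _ _ UTm.var fun m => rfl).trans (UTm.subst_var _)

theorem envrel_hasty {dir k} {Γ : List Ty} {γs γu} (h : EnvRel dir k (Γ.map Ty.toP) γs γu) :
    ∀ n τ', Γ[n]? = some τ' → HasTy [] (γs n) τ' := fun n τ' hn =>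
  valrel_hasty (h n τ'.toP (by simp [List.getElem?_map, hn])).2.2

theorem envrel_ws {dir k} {Γ : List Ty} {γs γu} (h : EnvRel dir k (Γ.map Ty.toP) γs γu) :
    ∀ n, n < Γ.length → (γu n).ws 0 := by
  intro n hn
  have hg : Γ[n]? = some Γ[n] := List.getElem?_eq_getElem hn
  exact valrel_ws (h n (Γ[n]).toP (by simp [List.getElem?_map, hg])).2.2

/-- typing condition for a lifted related substitution -/
theorem liftS_hasty {dir k} {Γ : List Ty} {γs γu} {τ₁ : Ty}
    (henv : EnvRel dir k (Γ.map Ty.toP) γs γu) :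
    ∀ n τ', (τ₁ :: Γ)[n]? = some τ' → HasTy [τ₁] (liftS γs n) τ' := by
  intro n τ' hn
  cases n with
  | zero => exact HasTy.var (by simpa using hn)
  | succ n =>
      have h0 := envrel_hasty henv n τ' (by simpa using hn)
      show HasTy [τ₁] ((γs n).rename Nat.succ) τ'
      rw [h0.closed_rename]
      exact h0.weaken

end FAC
namespace FAC

theorem fundamental {Γ t τ} (ht : HasTy Γ t τ) :
    ∀ (dir : Dir) (k : ℕ) (γs : ℕ → STm) (γu : ℕ → UTm),
      EnvRel dir k (Γ.map Ty.toP) γs γu →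
      TermRel dir k τ.toP (t.subst γs) ((erase t).subst γu) := by
  induction ht with
  | @var Γ n τ h =>
      intro dir k γs γu henv Cs Cu hK
      obtain ⟨oks, oku, K⟩ := hK
      obtain ⟨h1, h2, h3⟩ := henv n τ.toP (by simp [List.getElem?_map, h])
      exact K k le_rfl _ _ h1 h2 h3
  | unit =>
      intro dir k γs γu henv Cs Cu hK
      obtain ⟨oks, oku, K⟩ := hK
      exact K k le_rfl _ _ .unit .unit
        (valrel_unit.mpr ⟨HasTy.unit, trivial, rfl, rfl⟩)
  | tt =>
      intro dir k γs γu henv Cs Cu hK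
      obtain ⟨oks, oku, K⟩ := hK
      exact K k le_rfl _ _ .tt .tt
        (valrel_bool.mpr ⟨HasTy.tt, trivial, Or.inl ⟨rfl, rfl⟩⟩)
  | ff =>
      intro dir k γs γu henv Cs Cu hK
      obtain ⟨oks, oku, K⟩ := hK
      exact K k le_rfl _ _ .ff .ff
        (valrel_bool.mpr ⟨HasTy.ff, trivial, Or.inr ⟨rfl, rfl⟩⟩)
  | @lam Γ τ₁ τ₂ b hb ihb =>
      intro dir k γs γu henv Cs Cu hK
      obtain ⟨oks, oku, K⟩ := hK
      apply K k le_rfl _ _ SIsVal.lam UIsVal.lam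
      refine valrel_arr.mpr ⟨?_, ?_, _, _, by rw [repEmul_toP], rfl, ?_⟩
      · simp only [repEmul, repEmul_toP]
        exact HasTy.lam (hb.subst (liftS_hasty henv))
      · show ((erase b).subst (liftU γu)).ws (0+1)
        exact UTm.ws_subst _ (by simpa using erase_ws hb) (liftU_ws (envrel_ws henv))
      · intro j hj vs' vu' hvs hvu hrel Cs' Cu' oks' oku' hcond
        rw [subst_lift_subst0_S, subst_lift_subst0_U]
        exact ihb dir j _ _
          (envrel_cons hvs hvu hrel (envrel_mono (le_of_lt hj) henv))
          Cs' Cu' ⟨oks', oku', hcond⟩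
  | @app Γ t t' τ τ' h1 h2 ih1 ih2 =>
      intro dir k γs γu henv Cs Cu hK
      obtain ⟨oks, oku, K⟩ := hK
      have main := ih1 dir k γs γu henv
        (Cs.comp (.appL .hole (t'.subst γs))) (Cu.comp (.appL .hole ((erase t').subst γu)))
        ⟨SEC.comp_ok oks trivial, UEC.comp_ok oku trivial, ?_⟩
      · rw [SEC.comp_plug, UEC.comp_plug] at main
        simp only [SEC.plug, UEC.plug] at main; exact main
      intro i hi v1 w1 hv1 hw1 hrel1
      rw [SEC.comp_plug, UEC.comp_plug]
      simp only [SEC.plug, UEC.plug]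
      have main2 := ih2 dir i γs γu (envrel_mono hi henv)
        (Cs.comp (.appR v1 .hole)) (Cu.comp (.appR w1 .hole))
        ⟨SEC.comp_ok oks ⟨hv1, trivial⟩, UEC.comp_ok oku ⟨hw1, trivial⟩, ?_⟩
      · rw [SEC.comp_plug, UEC.comp_plug] at main2
        simpa only [SEC.plug, UEC.plug] using main2
      intro j hj v2 w2 hv2 hw2 hrel2
      rw [SEC.comp_plug, UEC.comp_plug]
      simp only [SEC.plug, UEC.plug]
      obtain ⟨-, -, ts1, tu1, e1, e2, hb1⟩ := valrel_arr.mp hrel1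
      subst e1; subst e2
      refine obs_antired (Cs.plug_step oks (SStep.beta hv2)).stepN
        (Cu.plug_step oku (UStep.beta hw2)).stepN (by omega) (by omega) ?_
      intro j2 hj2
      exact hb1 j2 (by omega) v2 w2 hv2 hw2 (valrel_mono τ' (by omega) hrel2)
        Cs Cu oks oku (fun i4 hi4 => K i4 (by omega))
  | @pair Γ t₁ t₂ τ₁ τ₂ h1 h2 ih1 ih2 =>
      intro dir k γs γu henv Cs Cu hK
      obtain ⟨oks, oku, K⟩ := hK
      have main := ih1 dir k γs γu henv
        (Cs.comp (.pairL .hole (t₂.subst γs))) (Cu.comp (.pairL .hole ((erase t₂).subst γu)))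
        ⟨SEC.comp_ok oks trivial, UEC.comp_ok oku trivial, ?_⟩
      · rw [SEC.comp_plug, UEC.comp_plug] at main
        simp only [SEC.plug, UEC.plug] at main; exact main
      intro i hi v1 w1 hv1 hw1 hrel1
      rw [SEC.comp_plug, UEC.comp_plug]
      simp only [SEC.plug, UEC.plug]
      have main2 := ih2 dir i γs γu (envrel_mono hi henv)
        (Cs.comp (.pairR v1 .hole)) (Cu.comp (.pairR w1 .hole))
        ⟨SEC.comp_ok oks ⟨hv1, trivial⟩, UEC.comp_ok oku ⟨hw1, trivial⟩, ?_⟩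
      · rw [SEC.comp_plug, UEC.comp_plug] at main2
        simpa only [SEC.plug, UEC.plug] using main2
      intro j hj v2 w2 hv2 hw2 hrel2
      rw [SEC.comp_plug, UEC.comp_plug]
      simp only [SEC.plug, UEC.plug]
      apply K j (by omega) _ _ (SIsVal.pair hv1 hv2) (UIsVal.pair hw1 hw2)
      refine valrel_prod.mpr ⟨?_, ⟨valrel_ws hrel1, valrel_ws hrel2⟩,
        v1, v2, w1, w2, rfl, rfl, hv1, hv2, hw1, hw2, ?_⟩
      · simp only [repEmul, repEmul_toP]
        exact HasTy.pair (valrel_hasty hrel1) (valrel_hasty hrel2)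
      · intro j' hj'
        exact ⟨valrel_mono τ₁ (by omega) hrel1, valrel_mono τ₂ (by omega) hrel2⟩
  | @p1 Γ t τ₁ τ₂ h ih =>
      intro dir k γs γu henv Cs Cu hK
      obtain ⟨oks, oku, K⟩ := hK
      have main := ih dir k γs γu henv
        (Cs.comp (.p1 .hole)) (Cu.comp (.p1 .hole))
        ⟨SEC.comp_ok oks trivial, UEC.comp_ok oku trivial, ?_⟩
      · rw [SEC.comp_plug, UEC.comp_plug] at main
        simp only [SEC.plug, UEC.plug] at main; exact main
      intro i hi v w hv hw hrel
      rw [SEC.comp_plug, UEC.comp_plug]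
      simp only [SEC.plug, UEC.plug]
      obtain ⟨-, -, v₁, v₂, u₁, u₂, e1, e2, hv1, hv2, hu1, hu2, hrec⟩ := valrel_prod.mp hrel
      subst e1; subst e2
      refine obs_antired (Cs.plug_step oks (SStep.p1V hv1 hv2)).stepN
        (Cu.plug_step oku (UStep.p1V hu1 hu2)).stepN (by omega) (by omega) ?_
      intro j2 hj2
      exact K j2 (by omega) _ _ hv1 hu1 (hrec j2 (by omega)).1
  | @p2 Γ t τ₁ τ₂ h ih =>
      intro dir k γs γu henv Cs Cu hK
      obtain ⟨oks, oku, K⟩ := hK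
      have main := ih dir k γs γu henv
        (Cs.comp (.p2 .hole)) (Cu.comp (.p2 .hole))
        ⟨SEC.comp_ok oks trivial, UEC.comp_ok oku trivial, ?_⟩
      · rw [SEC.comp_plug, UEC.comp_plug] at main
        simp only [SEC.plug, UEC.plug] at main; exact main
      intro i hi v w hv hw hrel
      rw [SEC.comp_plug, UEC.comp_plug]
      simp only [SEC.plug, UEC.plug]
      obtain ⟨-, -, v₁, v₂, u₁, u₂, e1, e2, hv1, hv2, hu1, hu2, hrec⟩ := valrel_prod.mp hrel
      subst e1; subst e2
      refine obs_antired (Cs.plug_step oks (SStep.p2V hv1 hv2)).stepN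
        (Cu.plug_step oku (UStep.p2V hu1 hu2)).stepN (by omega) (by omega) ?_
      intro j2 hj2
      exact K j2 (by omega) _ _ hv2 hu2 (hrec j2 (by omega)).2
  | @inl Γ t τ₁ τ₂ h ih =>
      intro dir k γs γu henv Cs Cu hK
      obtain ⟨oks, oku, K⟩ := hK
      have main := ih dir k γs γu henv
        (Cs.comp (.inl .hole)) (Cu.comp (.inl .hole))
        ⟨SEC.comp_ok oks trivial, UEC.comp_ok oku trivial, ?_⟩
      · rw [SEC.comp_plug, UEC.comp_plug] at main
        simp only [SEC.plug, UEC.plug] at main; exact main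
      intro i hi v w hv hw hrel
      rw [SEC.comp_plug, UEC.comp_plug]
      simp only [SEC.plug, UEC.plug]
      apply K i hi _ _ (SIsVal.inl hv) (UIsVal.inl hw)
      refine valrel_sum.mpr ⟨?_, ?_,
        Or.inl ⟨v, w, rfl, rfl, hv, hw, fun j' hj' => valrel_mono τ₁ (by omega) hrel⟩⟩
      · simp only [repEmul, repEmul_toP]
        exact HasTy.inl (valrel_hasty hrel)
      · show w.ws 0
        exact valrel_ws hrel
  | @inr Γ t τ₁ τ₂ h ih =>
      intro dir k γs γu henv Cs Cu hK
      obtain ⟨oks, oku, K⟩ := hK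
      have main := ih dir k γs γu henv
        (Cs.comp (.inr .hole)) (Cu.comp (.inr .hole))
        ⟨SEC.comp_ok oks trivial, UEC.comp_ok oku trivial, ?_⟩
      · rw [SEC.comp_plug, UEC.comp_plug] at main
        simp only [SEC.plug, UEC.plug] at main; exact main
      intro i hi v w hv hw hrel
      rw [SEC.comp_plug, UEC.comp_plug]
      simp only [SEC.plug, UEC.plug]
      apply K i hi _ _ (SIsVal.inr hv) (UIsVal.inr hw)
      refine valrel_sum.mpr ⟨?_, ?_,
        Or.inr ⟨v, w, rfl, rfl, hv, hw, fun j' hj' => valrel_mono τ₂ (by omega) hrel⟩⟩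
      · simp only [repEmul, repEmul_toP]
        exact HasTy.inr (valrel_hasty hrel)
      · show w.ws 0
        exact valrel_ws hrel
  | @caseOf Γ t t₁ t₂ τ₁ τ₂ τ h h1 h2 ih ih1 ih2 =>
      intro dir k γs γu henv Cs Cu hK
      obtain ⟨oks, oku, K⟩ := hK
      have main := ih dir k γs γu henv
        (Cs.comp (.caseOf .hole (t₁.subst (liftS γs)) (t₂.subst (liftS γs))))
        (Cu.comp (.caseOf .hole ((erase t₁).subst (liftU γu)) ((erase t₂).subst (liftU γu))))
        ⟨SEC.comp_ok oks trivial, UEC.comp_ok oku trivial, ?_⟩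
      · rw [SEC.comp_plug, UEC.comp_plug] at main
        simp only [SEC.plug, UEC.plug] at main; exact main
      intro i hi v w hv hw hrel
      rw [SEC.comp_plug, UEC.comp_plug]
      simp only [SEC.plug, UEC.plug]
      obtain ⟨-, -, hc⟩ := valrel_sum.mp hrel
      rcases hc with ⟨v', w', e1, e2, hv', hw', hrec⟩ | ⟨v', w', e1, e2, hv', hw', hrec⟩ <;>
        subst e1 <;> subst e2
      · refine obs_antired (Cs.plug_step oks (SStep.caseL hv')).stepN
          (Cu.plug_step oku (UStep.caseL hw')).stepN (by omega) (by omega) ?_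
        intro j2 hj2
        rw [subst_lift_subst0_S, subst_lift_subst0_U]
        exact ih1 dir j2 _ _
          (envrel_cons hv' hw' (hrec j2 (by omega)) (envrel_mono (by omega) henv))
          Cs Cu ⟨oks, oku, fun i4 hi4 => K i4 (by omega)⟩
      · refine obs_antired (Cs.plug_step oks (SStep.caseR hv')).stepN
          (Cu.plug_step oku (UStep.caseR hw')).stepN (by omega) (by omega) ?_
        intro j2 hj2
        rw [subst_lift_subst0_S, subst_lift_subst0_U]
        exact ih2 dir j2 _ _
          (envrel_cons hv' hw' (hrec j2 (by omega)) (envrel_mono (by omega) henv))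
          Cs Cu ⟨oks, oku, fun i4 hi4 => K i4 (by omega)⟩
  | @seq Γ t₁ t₂ τ h1 h2 ih1 ih2 =>
      intro dir k γs γu henv Cs Cu hK
      obtain ⟨oks, oku, K⟩ := hK
      have main := ih1 dir k γs γu henv
        (Cs.comp (.seq .hole (t₂.subst γs))) (Cu.comp (.seq .hole ((erase t₂).subst γu)))
        ⟨SEC.comp_ok oks trivial, UEC.comp_ok oku trivial, ?_⟩
      · rw [SEC.comp_plug, UEC.comp_plug] at main
        simp only [SEC.plug, UEC.plug] at main; exact main
      intro i hi v w hv hw hrel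
      rw [SEC.comp_plug, UEC.comp_plug]
      simp only [SEC.plug, UEC.plug]
      obtain ⟨-, -, e1, e2⟩ := valrel_unit.mp hrel
      subst e1; subst e2
      refine obs_antired (Cs.plug_step oks SStep.seqN).stepN
        (Cu.plug_step oku UStep.seqN).stepN (by omega) (by omega) ?_
      intro j2 hj2
      exact ih2 dir j2 γs γu (envrel_mono (by omega) henv)
        Cs Cu ⟨oks, oku, fun i4 hi4 => K i4 (by omega)⟩
  | @tif Γ t t₁ t₂ τ h h1 h2 ih ih1 ih2 =>
      intro dir k γs γu henv Cs Cu hK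
      obtain ⟨oks, oku, K⟩ := hK
      have main := ih dir k γs γu henv
        (Cs.comp (.tif .hole (t₁.subst γs) (t₂.subst γs)))
        (Cu.comp (.tif .hole ((erase t₁).subst γu) ((erase t₂).subst γu)))
        ⟨SEC.comp_ok oks trivial, UEC.comp_ok oku trivial, ?_⟩
      · rw [SEC.comp_plug, UEC.comp_plug] at main
        simp only [SEC.plug, UEC.plug] at main; exact main
      intro i hi v w hv hw hrel
      rw [SEC.comp_plug, UEC.comp_plug]
      simp only [SEC.plug, UEC.plug]
      obtain ⟨-, -, ⟨e1, e2⟩ | ⟨e1, e2⟩⟩ := valrel_bool.mp hrel <;> subst e1 <;> subst e2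
      · refine obs_antired (Cs.plug_step oks SStep.tifT).stepN
          (Cu.plug_step oku UStep.tifT).stepN (by omega) (by omega) ?_
        intro j2 hj2
        exact ih1 dir j2 γs γu (envrel_mono (by omega) henv)
          Cs Cu ⟨oks, oku, fun i4 hi4 => K i4 (by omega)⟩
      · refine obs_antired (Cs.plug_step oks SStep.tifF).stepN
          (Cu.plug_step oku UStep.tifF).stepN (by omega) (by omega) ?_
        intro j2 hj2
        exact ih2 dir j2 γs γu (envrel_mono (by omega) henv)
          Cs Cu ⟨oks, oku, fun i4 hi4 => K i4 (by omega)⟩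
  | @fixt Γ t a b h ih =>
      intro dir k γs γu henv Cs Cu hK
      obtain ⟨oks, oku, K⟩ := hK
      show Obs dir k (Cs.plug (.fixt a b (t.subst γs)))
        (Cu.plug (.app (Zcomb.subst γu) ((erase t).subst γu)))
      rw [UTm.closed_subst zcomb_ws]
      have main := ih dir k γs γu henv
        (Cs.comp (.fixt a b .hole)) (Cu.comp (.appR Zcomb .hole))
        ⟨SEC.comp_ok oks trivial, UEC.comp_ok oku ⟨UIsVal.lam, trivial⟩, ?_⟩
      · rw [SEC.comp_plug, UEC.comp_plug] at main
        simpa only [SEC.plug, UEC.plug] using main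
      intro i hi v w hv hw hrel
      rw [SEC.comp_plug, UEC.comp_plug]
      simp only [SEC.plug, UEC.plug]
      obtain ⟨hty0, hws0, ts1, tu1, e1, e2, -⟩ := valrel_arr.mp hrel
      rw [repEmul_toP] at e1
      subst e1; subst e2
      obtain ⟨-, -, ts₀, tu₀, hts₀, htu₀, Hb⟩ := valrel_arr.mp hrel
      rw [repEmul_toP] at hts₀
      have hts : ts₀ = ts1 := by injection hts₀ with _ h'; exact h'.symm
      have htu : tu₀ = tu1 := by injection htu₀ with h'; exact h'.symm
      rw [hts, htu] at Hb
      have hty1 : HasTy [] (STm.lam (.arr a b) ts1) (.arr (.arr a b) (.arr a b)) := by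
        simpa [repEmul, repEmul_toP] using hty0
      have efv : (STm.fixt a b (.lam (.arr a b) ts1)).rename Nat.succ
          = .fixt a b (.lam (.arr a b) ts1) := (HasTy.fixt hty1).closed_rename _
      have hsstep : SStep (.fixt a b (.lam (.arr a b) ts1))
          (ts1.subst0 (.lam a (.app (.fixt a b (.lam (.arr a b) ts1)) (.var 0)))) := by
        have := SStep.fixBeta (a := a) (b := b) (t := ts1)
        rwa [efv] at this
      refine obs_antired (Cs.plug_step oks hsstep).stepN
        (Cu.plug_stepN oku (zstepN3 hws0)) (by omega) (by omega) ?_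
      intro j2 hj2
      exact Hb j2 (by omega) _ _ SIsVal.lam UIsVal.lam
        (fix_lob hty1 hws0 hrel j2 (by omega))
        Cs Cu oks oku (fun i4 hi4 => K i4 (by omega))

end FAC

open FAC in
/-- type erasure is semantics-preserving: every well-typed term
is logically related to its erasure, up to any number of steps and in both
directions. -/
theorem erase_semantics_preserving {Γ : List Ty} {t : STm} {τ : Ty}
    (ht : HasTy Γ t τ) :
    ∀ (n : ℕ) (dir : Dir), LogRelN dir n (Γ.map Ty.toP) t (erase t) τ.toP := by
  intro n dir
  refine ⟨?_, ?_, fun k _ γs γu henv => fundamental ht dir k γs γu henv⟩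
  · rw [repEmul_toP]
    have e : (Γ.map Ty.toP).map repEmul = Γ := by
      rw [List.map_map]
      conv_rhs => rw [← List.map_id Γ]
      exact List.map_congr_left fun a _ => repEmul_toP a
    rw [e]
    exact ht
  · simpa using erase_ws ht
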